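/- arXiv:1010.6261 — 4 statements merged into one kernel-verified Lean document; each statement's English description precedes it below -/
import Mathlib

section
/- For n ≥ 1 and 1 ≤ i ≤ n, the number of standard skew Young tableaux of skew shape (n, n, i)/(i−1) equals f^{(n,n,i)/(i−1)} = binom(2n+1, n−1)·binom(n−1, i−1). -/
/-- `i` (1-based) is a descent of the word `w`, i.e. `1 ≤ i ≤ w.length - 1` and
`w_i > w_{i+1}` (1-based entries). -/
def DescentAt (w : List ℕ) (i : ℕ) : Prop :=
  1 ≤ i ∧ i + 1 ≤ w.length ∧ w.getD i 0 < w.getD (i - 1) 0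

instance (w : List ℕ) (i : ℕ) : Decidable (DescentAt w i) :=
  inferInstanceAs (Decidable (_ ∧ _ ∧ _))

/-- `i` (1-based) is an ascent of the word `w`. -/
def AscentAt (w : List ℕ) (i : ℕ) : Prop :=
  1 ≤ i ∧ i + 1 ≤ w.length ∧ w.getD (i - 1) 0 < w.getD i 0

instance (w : List ℕ) (i : ℕ) : Decidable (AscentAt w i) :=
  inferInstanceAs (Decidable (_ ∧ _ ∧ _))

/-- The set of descent positions of `w`. -/
def descents (w : List ℕ) : Finset ℕ :=
  (Finset.range w.length).filter (fun i => DescentAt w i)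

/-- `w` is a permutation of `[n] = {1,…,n}`, written as a word. -/
def IsPermWord (n : ℕ) (w : List ℕ) : Prop :=
  w.length = n ∧ w.Nodup ∧ ∀ x ∈ w, 1 ≤ x ∧ x ≤ n

/-- Two words of distinct entries are in the same relative order. -/
def SameRelOrder (u v : List ℕ) : Prop :=
  u.length = v.length ∧
    ∀ p q, p < u.length → q < u.length →
      (u.getD p 0 < u.getD q 0 ↔ v.getD p 0 < v.getD q 0)

/-- `σ ≺ w`: the word `w` contains the pattern `σ`, i.e. `w` has a subsequence
in the same relative order as `σ`. -/
def ContainsPattern (σ w : List ℕ) : Prop :=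
  ∃ s : List ℕ, s.Sublist w ∧ SameRelOrder s σ

/-- `w` is a minimal permutation with `d` descents: it has exactly `d` descents and
no strictly shorter permutation with exactly `d` descents occurs in it as a pattern. -/
def MinimalPerm (d : ℕ) (w : List ℕ) : Prop :=
  (descents w).card = d ∧
    ∀ (m : ℕ) (σ : List ℕ), IsPermWord m σ → m < w.length →
      (descents σ).card = d → ¬ ContainsPattern σ w

/-- `w` is a minimal permutation (with its own number of descents). -/
def IsMinimal (w : List ℕ) : Prop :=
  MinimalPerm (descents w).card w

/-- The set `𝓕_d(n)` of minimal permutations of length `n` with `d` descents. -/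
def minimalPerms (d n : ℕ) : Set (List ℕ) :=
  {w | IsPermWord n w ∧ MinimalPerm d w}

/-- `f_d(n) = |𝓕_d(n)|`. -/
noncomputable def fCount (d n : ℕ) : ℕ :=
  (minimalPerms d n).ncard

/-- `w` has ascent sequence `a`: `w` decomposes into maximal strictly decreasing
runs whose lengths, from left to right, are the entries of `a` (maximality is
expressed by the junctions between consecutive runs being ascents). -/
def HasAscentSeq (w a : List ℕ) : Prop :=
  ∃ bs : List (List ℕ), bs.flatten = w ∧ bs.map List.length = a ∧
    (∀ b ∈ bs, b ≠ [] ∧ List.Chain' (fun x y => x > y) b) ∧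
    List.Chain' (fun b c => ∃ x ∈ b.getLast?, ∃ y ∈ c.head?, x < y) bs

/-- The set `𝓕_{a₁,…,a_k}(n)` of minimal permutations of length `n` with
ascent sequence `a = (a₁,…,a_k)`. -/
def minimalPermsAsc (n : ℕ) (a : List ℕ) : Set (List ℕ) :=
  {w | IsPermWord n w ∧ IsMinimal w ∧ HasAscentSeq w a}

/-- `F_{a₁,…,a_k}(n) = |𝓕_{a₁,…,a_k}(n)|`. -/
noncomputable def FCount (n : ℕ) (a : List ℕ) : ℕ :=
  (minimalPermsAsc n a).ncard

/-- A standard filling of a given cell set by `1,…,N`: zero off the cells,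
a bijection from the cells onto `{1,…,N}`, strictly increasing along rows
(second coordinate) and columns (first coordinate). -/
def IsTableauOn (cell : ℕ → ℕ → Prop) (N : ℕ) (T : ℕ → ℕ → ℕ) : Prop :=
  (∀ r c, ¬ cell r c → T r c = 0) ∧
  (∀ r c, cell r c → 1 ≤ T r c ∧ T r c ≤ N) ∧
  (∀ r c r' c', cell r c → cell r' c' → T r c = T r' c' → r = r' ∧ c = c') ∧
  (∀ v, 1 ≤ v → v ≤ N → ∃ r c, cell r c ∧ T r c = v) ∧
  (∀ r c, cell r c → cell r (c + 1) → T r c < T r (c + 1)) ∧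
  (∀ r c, cell r c → cell (r + 1) c → T r c < T (r + 1) c)

/-- The cells of the skew shape `λ/μ` (rows indexed from `0` downward,
columns from `0` rightward): row `r` contains columns `μ_r ≤ c < λ_r`. -/
def skewCell (l m : List ℕ) (r c : ℕ) : Prop :=
  r < l.length ∧ m.getD r 0 ≤ c ∧ c < l.getD r 0

/-- A standard skew Young tableau of shape `λ/μ`. -/
def IsSkewSYT (l m : List ℕ) (T : ℕ → ℕ → ℕ) : Prop :=
  IsTableauOn (skewCell l m) (l.sum - m.sum) T

/-- `f^{λ/μ}`, the number of standard skew Young tableaux of shape `λ/μ`. -/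
noncomputable def skewSYTCount (l m : List ℕ) : ℕ :=
  Nat.card {T : ℕ → ℕ → ℕ // IsSkewSYT l m T}

/-- The row index of the top cell of column `c` in the 2-regular skew shape
with column lengths `a₁,…,a_k` (columns normalized so that the last column
starts in row `0`; consecutive columns overlap in exactly two rows). -/
def colTop (a : List ℕ) (c : ℕ) : ℕ :=
  (a.drop (c + 1)).sum - 2 * (a.length - 1 - c)

/-- The cells of the 2-regular skew shape with column lengths `a₁,…,a_k`:
column `c` occupies the `a_c` rows starting at `colTop a c`, so that any two
consecutive columns overlap in exactly two rows. -/
def twoRegCell (a : List ℕ) (r c : ℕ) : Prop :=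
  c < a.length ∧ colTop a c ≤ r ∧ r < colTop a c + a.getD c 0

/-- A 2-regular skew tableau with column lengths `a₁,…,a_k`: a standard filling
of the 2-regular skew shape by `1,…,a₁+⋯+a_k`. -/
def Is2RegularTableau (a : List ℕ) (T : ℕ → ℕ → ℕ) : Prop :=
  IsTableauOn (twoRegCell a) a.sum T

/-- `𝓜_{2n+1,2i}`: minimal permutations of length `2n+1` with `n+1` descents whose
unique pair of consecutive descents is `(2i-1, 2i)`. -/
def Mset (n i : ℕ) : Set (List ℕ) :=
  {w | IsPermWord (2 * n + 1) w ∧ MinimalPerm (n + 1) w ∧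
    DescentAt w (2 * i - 1) ∧ DescentAt w (2 * i) ∧
    ∀ j, DescentAt w j → DescentAt w (j + 1) → j = 2 * i - 1}

/-- Elementary Knuth transformations on words of distinct integers. -/
inductive KnuthStep : List ℕ → List ℕ → Prop
  | k1 (u v : List ℕ) (x y z : ℕ) (hxy : x < y) (hyz : y < z) :
      KnuthStep (u ++ [x, z, y] ++ v) (u ++ [z, x, y] ++ v)
  | k2 (u v : List ℕ) (x y z : ℕ) (hxy : x < y) (hyz : y < z) :
      KnuthStep (u ++ [y, x, z] ++ v) (u ++ [y, z, x] ++ v)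

/-- Knuth equivalence of words. -/
def KnuthEquiv : List ℕ → List ℕ → Prop := Relation.EqvGen KnuthStep


section Removal

variable {cell : ℕ → ℕ → Prop} {r0 c0 N : ℕ} {T : ℕ → ℕ → ℕ}

/-- The smaller cell set after removing one cell. -/
def rcell (cell : ℕ → ℕ → Prop) (r0 c0 : ℕ) : ℕ → ℕ → Prop :=
  fun r c => cell r c ∧ ¬(r = r0 ∧ c = c0)

noncomputable def growT (cell : ℕ → ℕ → Prop) (r0 c0 : ℕ) (T : ℕ → ℕ → ℕ) : ℕ → ℕ → ℕ :=
  open Classical in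
  fun r c => if r = r0 ∧ c = c0 then 1 else if cell r c then T r c + 1 else 0

lemma shrink_tab (hT : IsTableauOn cell (N+1) T) (h1 : T r0 c0 = 1) (h0 : cell r0 c0) :
    IsTableauOn (rcell cell r0 c0) N (fun r c => T r c - 1) := by
  obtain ⟨hoff, hbd, hinj, hsurj, hrow, hcol⟩ := hT
  have hne1 : ∀ r c, rcell cell r0 c0 r c → 2 ≤ T r c := by
    rintro r c ⟨hc, hne⟩
    have hb := hbd r c hc
    rcases Nat.lt_or_ge (T r c) 2 with h | h
    · have h' : T r c = 1 := by omega
      exact absurd (hinj r c r0 c0 hc h0 (h'.trans h1.symm)) hne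
    · exact h
  refine ⟨?_, ?_, ?_, ?_, ?_, ?_⟩
  · intro r c hnc
    show T r c - 1 = 0
    by_cases hc : cell r c
    · have : r = r0 ∧ c = c0 := by
        by_contra hne; exact hnc ⟨hc, hne⟩
      obtain ⟨rfl, rfl⟩ := this
      omega
    · rw [hoff r c hc]
  · intro r c hc
    have h2 := hne1 r c hc
    have h3 := (hbd r c hc.1).2
    show 1 ≤ T r c - 1 ∧ T r c - 1 ≤ N
    omega
  · intro r c r' c' hc hc' he
    have h2 := hne1 r c hc
    have h3 := hne1 r' c' hc'
    have he' : T r c - 1 = T r' c' - 1 := he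
    exact hinj r c r' c' hc.1 hc'.1 (by omega)
  · intro v h1v h2v
    obtain ⟨r, c, hc, hv⟩ := hsurj (v+1) (by omega) (by omega)
    refine ⟨r, c, ⟨hc, ?_⟩, show T r c - 1 = v by omega⟩
    rintro ⟨rfl, rfl⟩
    omega
  · intro r c hc hc'
    have := hrow r c hc.1 hc'.1
    have := hne1 r c hc
    show T r c - 1 < T r (c+1) - 1
    omega
  · intro r c hc hc'
    have := hcol r c hc.1 hc'.1
    have := hne1 r c hc
    show T r c - 1 < T (r+1) c - 1
    omega

lemma growT_pos {r c : ℕ} (h : r = r0 ∧ c = c0) (T : ℕ → ℕ → ℕ) :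
    growT cell r0 c0 T r c = 1 := by
  simp only [growT, if_pos h]

lemma growT_cell {r c : ℕ} (h : ¬(r = r0 ∧ c = c0)) (hc : cell r c) (T : ℕ → ℕ → ℕ) :
    growT cell r0 c0 T r c = T r c + 1 := by
  simp only [growT, if_neg h, if_pos hc]

lemma growT_off {r c : ℕ} (h : ¬(r = r0 ∧ c = c0)) (hc : ¬ cell r c) (T : ℕ → ℕ → ℕ) :
    growT cell r0 c0 T r c = 0 := by
  simp only [growT, if_neg h, if_neg hc]

lemma growT_one : growT cell r0 c0 T r0 c0 = 1 := growT_pos ⟨rfl, rfl⟩ T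

lemma grow_tab (hT : IsTableauOn (rcell cell r0 c0) N T) (h0 : cell r0 c0)
    (hL : ∀ c, c + 1 = c0 → ¬ cell r0 c) (hU : ∀ r, r + 1 = r0 → ¬ cell r c0) :
    IsTableauOn cell (N+1) (growT cell r0 c0 T) := by
  obtain ⟨hoff, hbd, hinj, hsurj, hrow, hcol⟩ := hT
  refine ⟨?_, ?_, ?_, ?_, ?_, ?_⟩
  · intro r c hnc
    exact growT_off (by rintro ⟨rfl, rfl⟩; exact hnc h0) hnc T
  · intro r c hc
    by_cases he : r = r0 ∧ c = c0
    · rw [growT_pos he]; omega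
    · rw [growT_cell he hc]
      have := hbd r c ⟨hc, he⟩
      omega
  · intro r c r' c' hc hc' he
    by_cases h1 : r = r0 ∧ c = c0 <;> by_cases h2 : r' = r0 ∧ c' = c0
    · exact ⟨h1.1.trans h2.1.symm, h1.2.trans h2.2.symm⟩
    · rw [growT_pos h1, growT_cell h2 hc'] at he
      have := (hbd r' c' ⟨hc', h2⟩).1
      omega
    · rw [growT_cell h1 hc, growT_pos h2] at he
      have := (hbd r c ⟨hc, h1⟩).1
      omega
    · rw [growT_cell h1 hc, growT_cell h2 hc'] at he
      exact hinj r c r' c' ⟨hc, h1⟩ ⟨hc', h2⟩ (by omega)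
  · intro v h1v h2v
    rcases Nat.lt_or_ge v 2 with h | h
    · have hv1 : v = 1 := by omega
      exact ⟨r0, c0, h0, by rw [hv1]; exact growT_one⟩
    · obtain ⟨r, c, ⟨hc, hne⟩, hv⟩ := hsurj (v-1) (by omega) (by omega)
      refine ⟨r, c, hc, ?_⟩
      rw [growT_cell hne hc]
      omega
  · intro r c hc hc'
    by_cases h1 : r = r0 ∧ c = c0
    · rw [growT_pos h1]
      have h2 : ¬(r = r0 ∧ c + 1 = c0) := by omega
      rw [growT_cell h2 hc']
      have := (hbd r (c+1) ⟨hc', h2⟩).1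
      omega
    · by_cases h2 : r = r0 ∧ c + 1 = c0
      · exact absurd hc (h2.1 ▸ hL c h2.2)
      · rw [growT_cell h1 hc, growT_cell h2 hc']
        have := hrow r c ⟨hc, h1⟩ ⟨hc', h2⟩
        omega
  · intro r c hc hc'
    by_cases h1 : r = r0 ∧ c = c0
    · rw [growT_pos h1]
      have h2 : ¬(r + 1 = r0 ∧ c = c0) := by omega
      rw [growT_cell h2 hc']
      have := (hbd (r+1) c ⟨hc', h2⟩).1
      omega
    · by_cases h2 : r + 1 = r0 ∧ c = c0
      · exact absurd hc (h2.2 ▸ hU r h2.1)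
      · rw [growT_cell h1 hc, growT_cell h2 hc']
        have := hcol r c ⟨hc, h1⟩ ⟨hc', h2⟩
        omega

lemma card_removal (cell : ℕ → ℕ → Prop) (r0 c0 N : ℕ) (h0 : cell r0 c0)
    (hL : ∀ c, c + 1 = c0 → ¬ cell r0 c) (hU : ∀ r, r + 1 = r0 → ¬ cell r c0) :
    Nat.card {T : ℕ → ℕ → ℕ // IsTableauOn cell (N+1) T ∧ T r0 c0 = 1}
      = Nat.card {T : ℕ → ℕ → ℕ // IsTableauOn (rcell cell r0 c0) N T} := by
  apply Nat.card_congr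
  refine
    { toFun := fun T => ⟨fun r c => T.1 r c - 1, shrink_tab T.2.1 T.2.2 h0⟩
      invFun := fun T => ⟨growT cell r0 c0 T.1, grow_tab T.2 h0 hL hU, growT_one⟩
      left_inv := ?_
      right_inv := ?_ }
  · rintro ⟨T, ⟨hoff, hbd, hinj, hsurj, hrow, hcol⟩, h1⟩
    apply Subtype.ext
    funext r c
    show growT cell r0 c0 (fun r c => T r c - 1) r c = T r c
    by_cases he : r = r0 ∧ c = c0
    · rw [growT_pos he]
      obtain ⟨rfl, rfl⟩ := he
      omega
    · by_cases hc : cell r c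
      · rw [growT_cell he hc]
        have := (hbd r c hc).1
        show T r c - 1 + 1 = T r c
        omega
      · rw [growT_off he hc, hoff r c hc]
  · rintro ⟨T, hT⟩
    obtain ⟨hoff, hbd, hinj, hsurj, hrow, hcol⟩ := hT
    apply Subtype.ext
    funext r c
    show growT cell r0 c0 T r c - 1 = T r c
    by_cases he : r = r0 ∧ c = c0
    · rw [growT_pos he]
      have : T r c = 0 := hoff r c (fun hh => hh.2 he)
      omega
    · by_cases hc : cell r c
      · rw [growT_cell he hc]
        omega
      · rw [growT_off he hc, hoff r c (fun hh => hc hh.1)]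

end Removal

section MainCount

lemma tableaux_finite (cell : ℕ → ℕ → Prop) (R C N : ℕ)
    (hb : ∀ r c, cell r c → r < R ∧ c < C) :
    {T : ℕ → ℕ → ℕ | IsTableauOn cell N T}.Finite := by
  classical
  apply Set.Finite.of_finite_image
    (f := fun T (p : Fin R × Fin C) => (⟨min (T p.1 p.2) N, by omega⟩ : Fin (N+1)))
  · exact Set.toFinite _
  · intro T hT T' hT' h
    funext r c
    by_cases hc : cell r c
    · obtain ⟨hr, hcc⟩ := hb r c hc
      have h1 := hT.2.1 r c hc
      have h2 := hT'.2.1 r c hc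
      have := congrFun h (⟨r, hr⟩, ⟨c, hcc⟩)
      simp only [Fin.mk.injEq] at this
      omega
    · rw [hT.1 r c hc, hT'.1 r c hc]

lemma count_empty (cell : ℕ → ℕ → Prop) (hc : ∀ r c, ¬ cell r c) :
    Nat.card {T : ℕ → ℕ → ℕ // IsTableauOn cell 0 T} = 1 := by
  have : Unique {T : ℕ → ℕ → ℕ // IsTableauOn cell 0 T} := by
    refine ⟨⟨⟨fun _ _ => 0, ?_⟩⟩, ?_⟩
    · exact ⟨fun _ _ _ => rfl, fun r c h => absurd h (hc r c),
        fun r c r' c' h => absurd h (hc r c),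
        fun v h1 h2 => absurd (h1.trans h2) (by omega),
        fun r c h => absurd h (hc r c), fun r c h => absurd h (hc r c)⟩
    · rintro ⟨T, hT⟩
      apply Subtype.ext
      funext r c
      exact hT.1 r c (hc r c)
  exact Nat.card_unique

lemma skewCell_iff (a b c m1 m2 m3 r k : ℕ) :
    skewCell [a,b,c] [m1,m2,m3] r k ↔
      (r = 0 ∧ m1 ≤ k ∧ k < a) ∨ (r = 1 ∧ m2 ≤ k ∧ k < b) ∨ (r = 2 ∧ m3 ≤ k ∧ k < c) := by
  unfold skewCell
  rcases r with _ | _ | _ | r <;> simp [List.getD] <;> omega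

/-- In a standard tableau, the cell containing `1` has no cell to its left. -/
lemma no_left_of_one {cell : ℕ → ℕ → Prop} {T : ℕ → ℕ → ℕ} {N r k : ℕ}
    (hT : IsTableauOn cell N T) (h1 : T r k = 1) (hk : 1 ≤ k)
    (hc : cell r k) (hc' : cell r (k-1)) : False := by
  obtain ⟨hoff, hbd, hinj, hsurj, hrow, hcol⟩ := hT
  have h2 : cell r (k-1+1) := by rwa [Nat.sub_add_cancel hk]
  have h3 := hrow r (k-1) hc' h2
  rw [Nat.sub_add_cancel hk, h1] at h3
  have := (hbd r (k-1) hc').1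
  omega

/-- In a standard tableau, the cell containing `1` has no cell above it. -/
lemma no_above_of_one {cell : ℕ → ℕ → Prop} {T : ℕ → ℕ → ℕ} {N r k : ℕ}
    (hT : IsTableauOn cell N T) (h1 : T r k = 1) (hr : 1 ≤ r)
    (hc : cell r k) (hc' : cell (r-1) k) : False := by
  obtain ⟨hoff, hbd, hinj, hsurj, hrow, hcol⟩ := hT
  have h2 : cell (r-1+1) k := by rwa [Nat.sub_add_cancel hr]
  have h3 := hcol (r-1) k hc' h2
  rw [Nat.sub_add_cancel hr, h1] at h3
  have := (hbd (r-1) k hc').1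
  omega

lemma cell_of_one {cell : ℕ → ℕ → Prop} {T : ℕ → ℕ → ℕ} {N r k : ℕ}
    (hT : IsTableauOn cell N T) (h1 : T r k = 1) : cell r k := by
  by_contra h
  rw [hT.1 r k h] at h1
  omega

end MainCount
open Nat (factorial)
noncomputable section AitkenAux

/-- `1/k!` for `k ≥ 0`, `0` for `k < 0`. -/
def ffQ (k : ℤ) : ℚ := if 0 ≤ k then (factorial k.toNat : ℚ)⁻¹ else 0

lemma ffQ_coe (m : ℕ) : ffQ (m : ℤ) = ((factorial m) : ℚ)⁻¹ := by
  simp [ffQ]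

lemma ffQ_neg {k : ℤ} (h : k < 0) : ffQ k = 0 := by
  simp [ffQ, not_le.mpr h]

lemma ffQ_step (k : ℤ) : (k : ℚ) * ffQ k = ffQ (k - 1) := by
  rcases lt_trichotomy k 0 with h | h | h
  · rw [ffQ_neg h, ffQ_neg (by omega), mul_zero]
  · subst h; rw [ffQ_neg (show (0:ℤ)-1 < 0 by norm_num)]; simp
  · obtain ⟨m, rfl⟩ : ∃ m : ℕ, k = (m : ℤ) + 1 := ⟨(k-1).toNat, by omega⟩
    rw [show ((m:ℤ)+1) - 1 = (m:ℤ) by ring, ffQ_coe]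
    rw [show ((m:ℤ)+1) = ((m+1 : ℕ) : ℤ) by push_cast; ring, ffQ_coe]
    have h1 : ((factorial (m+1)) : ℚ) = (m+1) * (factorial m) := by
      rw [Nat.factorial_succ]; push_cast; ring
    have h2 : ((factorial m) : ℚ) ≠ 0 := by positivity
    have h3 : ((m:ℚ)+1) ≠ 0 := by positivity
    rw [h1]
    push_cast
    field_simp

/-- explicit 3×3 Aitken determinant. -/
def DQ (x1 x2 x3 y1 y2 y3 : ℤ) : ℚ :=
    ffQ (x1-y1) * ffQ (x2-y2) * ffQ (x3-y3)
  + ffQ (x1-y2) * ffQ (x2-y3) * ffQ (x3-y1)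
  + ffQ (x1-y3) * ffQ (x2-y1) * ffQ (x3-y2)
  - ffQ (x1-y3) * ffQ (x2-y2) * ffQ (x3-y1)
  - ffQ (x1-y1) * ffQ (x2-y3) * ffQ (x3-y2)
  - ffQ (x1-y2) * ffQ (x2-y1) * ffQ (x3-y3)

lemma DQ_step (x1 x2 x3 y1 y2 y3 : ℤ) :
    DQ x1 x2 x3 (y1+1) y2 y3 + DQ x1 x2 x3 y1 (y2+1) y3 + DQ x1 x2 x3 y1 y2 (y3+1)
      = ((x1+x2+x3-y1-y2-y3 : ℤ) : ℚ) * DQ x1 x2 x3 y1 y2 y3 := by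
  have key : ∀ x y : ℤ, ffQ (x - (y+1)) = ((x:ℚ) - y) * ffQ (x - y) := by
    intro x y
    rw [show x - (y+1) = (x - y) - 1 by ring, ← ffQ_step]
    push_cast; ring
  simp only [DQ, key]
  push_cast
  ring

/-- columns 1,2 equal. -/
lemma DQ_eq12 (x1 x2 x3 y1 y2 y3 : ℤ) (h : y1 = y2) : DQ x1 x2 x3 y1 y2 y3 = 0 := by
  subst h; simp only [DQ]; ring

lemma DQ_eq23 (x1 x2 x3 y1 y2 y3 : ℤ) (h : y2 = y3) : DQ x1 x2 x3 y1 y2 y3 = 0 := by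
  subst h; simp only [DQ]; ring

end AitkenAux

section DQvanish

lemma ffQ_zero : ffQ 0 = 1 := by simp [ffQ]

/-- column 1 of the determinant vanishes. -/
lemma DQ_col1 {x1 x2 x3 y1 y2 y3 : ℤ} (h1 : x1 - y1 < 0) (h2 : x2 - y1 < 0)
    (h3 : x3 - y1 < 0) : DQ x1 x2 x3 y1 y2 y3 = 0 := by
  simp only [DQ, ffQ_neg h1, ffQ_neg h2, ffQ_neg h3]; ring

/-- the lower-left 2×2 block of the determinant vanishes. -/
lemma DQ_block2 {x1 x2 x3 y1 y2 y3 : ℤ} (h1 : x2 - y1 < 0) (h2 : x3 - y1 < 0)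
    (h3 : x2 - y2 < 0) (h4 : x3 - y2 < 0) : DQ x1 x2 x3 y1 y2 y3 = 0 := by
  simp only [DQ, ffQ_neg h1, ffQ_neg h2, ffQ_neg h3, ffQ_neg h4]; ring

/-- row 3 of the determinant vanishes. -/
lemma DQ_row3 {x1 x2 x3 y1 y2 y3 : ℤ} (h1 : x3 - y1 < 0) (h2 : x3 - y2 < 0)
    (h3 : x3 - y3 < 0) : DQ x1 x2 x3 y1 y2 y3 = 0 := by
  simp only [DQ, ffQ_neg h1, ffQ_neg h2, ffQ_neg h3]; ring

end DQvanish

open Nat (factorial) in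
lemma aitken3 (N : ℕ) : ∀ a b c m1 m2 m3 : ℕ, c ≤ b → b ≤ a → m2 ≤ m1 → m3 ≤ m2 →
    m1 ≤ a → m2 ≤ b → m3 ≤ c → m1 + m2 + m3 + N = a + b + c →
    (skewSYTCount [a,b,c] [m1,m2,m3] : ℚ)
      = (factorial N : ℚ) *
        DQ ((a:ℤ)-1) ((b:ℤ)-2) ((c:ℤ)-3) ((m1:ℤ)-1) ((m2:ℤ)-2) ((m3:ℤ)-3) := by
  induction N with
  | zero =>
    intro a b c m1 m2 m3 hcb hba h21 h32 h1a h2b h3c hsum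
    obtain ⟨rfl, rfl, rfl⟩ : m1 = a ∧ m2 = b ∧ m3 = c := by omega
    have hcells : ∀ r k, ¬ skewCell [m1,m2,m3] [m1,m2,m3] r k := by
      intro r k h
      rw [skewCell_iff] at h
      omega
    have hs : [m1,m2,m3].sum - [m1,m2,m3].sum = 0 := Nat.sub_self _
    have hP : IsSkewSYT [m1,m2,m3] [m1,m2,m3] = IsTableauOn (skewCell [m1,m2,m3] [m1,m2,m3]) 0 := by
      unfold IsSkewSYT
      rw [hs]
    rw [skewSYTCount, hP, count_empty _ hcells]
    have hD : DQ ((m1:ℤ)-1) ((m2:ℤ)-2) ((m3:ℤ)-3) ((m1:ℤ)-1) ((m2:ℤ)-2) ((m3:ℤ)-3) = 1 := by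
      unfold DQ
      rw [show (m1:ℤ)-1-((m1:ℤ)-1) = 0 by ring, show (m2:ℤ)-2-((m2:ℤ)-2) = 0 by ring,
        show (m3:ℤ)-3-((m3:ℤ)-3) = 0 by ring, ffQ_zero,
        ffQ_neg (show (m2:ℤ)-2-((m1:ℤ)-1) < 0 by omega),
        ffQ_neg (show (m3:ℤ)-3-((m1:ℤ)-1) < 0 by omega),
        ffQ_neg (show (m3:ℤ)-3-((m2:ℤ)-2) < 0 by omega)]
      ring
    rw [hD]
    norm_num [Nat.factorial]
  | succ N ih =>
    intro a b c m1 m2 m3 hcb hba h21 h32 h1a h2b h3c hsum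
    have hs : [a,b,c].sum - [m1,m2,m3].sum = N + 1 := by simp; omega
    have hP : IsSkewSYT [a,b,c] [m1,m2,m3]
        = IsTableauOn (skewCell [a,b,c] [m1,m2,m3]) (N+1) := by
      unfold IsSkewSYT
      rw [hs]
    -- the three subsets according to the position of the entry 1
    set cl := skewCell [a,b,c] [m1,m2,m3] with hcl
    set s : Set (ℕ → ℕ → ℕ) := {T | IsTableauOn cl (N+1) T} with hsdef
    set s0 : Set (ℕ → ℕ → ℕ) := {T | IsTableauOn cl (N+1) T ∧ T 0 m1 = 1} with hs0def
    set s1 : Set (ℕ → ℕ → ℕ) := {T | IsTableauOn cl (N+1) T ∧ T 1 m2 = 1} with hs1def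
    set s2 : Set (ℕ → ℕ → ℕ) := {T | IsTableauOn cl (N+1) T ∧ T 2 m3 = 1} with hs2def
    have hfin : s.Finite := by
      apply tableaux_finite cl 3 a (N+1)
      intro r k h
      rw [hcl, skewCell_iff] at h
      omega
    have hfin0 : s0.Finite := hfin.subset (fun T hT => hT.1)
    have hfin1 : s1.Finite := hfin.subset (fun T hT => hT.1)
    have hfin2 : s2.Finite := hfin.subset (fun T hT => hT.1)
    -- coverage
    have cover : s = (s0 ∪ s1) ∪ s2 := by
      ext T
      simp only [hsdef, hs0def, hs1def, hs2def, Set.mem_union, Set.mem_setOf_eq]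
      constructor
      · intro hT
        obtain ⟨hoff, hbd, hinj, hsurj, hrow, hcol⟩ := id hT
        obtain ⟨r, k, hc, h1⟩ := hsurj 1 le_rfl (by omega)
        rw [hcl, skewCell_iff] at hc
        rcases hc with ⟨rfl, hm, hl⟩ | ⟨rfl, hm, hl⟩ | ⟨rfl, hm, hl⟩
        · left; left
          refine ⟨hT, ?_⟩
          have hk : k = m1 := by
            by_contra hne
            exact no_left_of_one hT h1 (by omega)
              (by rw [hcl, skewCell_iff]; omega) (by rw [hcl, skewCell_iff]; omega)
          rwa [hk] at h1
        · left; right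
          refine ⟨hT, ?_⟩
          have hk : k = m2 := by
            by_contra hne
            exact no_left_of_one hT h1 (by omega)
              (by rw [hcl, skewCell_iff]; omega) (by rw [hcl, skewCell_iff]; omega)
          rwa [hk] at h1
        · right
          refine ⟨hT, ?_⟩
          have hk : k = m3 := by
            by_contra hne
            exact no_left_of_one hT h1 (by omega)
              (by rw [hcl, skewCell_iff]; omega) (by rw [hcl, skewCell_iff]; omega)
          rwa [hk] at h1
      · rintro ((⟨hT, _⟩ | ⟨hT, _⟩) | ⟨hT, _⟩) <;> exact hT
    -- disjointness
    have huniq : ∀ T, IsTableauOn cl (N+1) T → ∀ r k r' k', T r k = 1 → T r' k' = 1 →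
        r = r' ∧ k = k' := by
      intro T hT r k r' k' h1 h2
      exact hT.2.2.1 r k r' k' (cell_of_one hT h1) (cell_of_one hT h2) (h1.trans h2.symm)
    have hd01 : Disjoint s0 s1 := by
      rw [Set.disjoint_left]
      rintro T ⟨hT, hu⟩ ⟨_, hv⟩
      have := (huniq T hT 0 m1 1 m2 hu hv).1
      omega
    have hd2 : Disjoint (s0 ∪ s1) s2 := by
      rw [Set.disjoint_left]
      rintro T (⟨hT, hu⟩ | ⟨hT, hu⟩) ⟨_, hv⟩
      · have := (huniq T hT 0 m1 2 m3 hu hv).1; omega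
      · have := (huniq T hT 1 m2 2 m3 hu hv).1; omega
    -- the count splits
    have hsplit : (skewSYTCount [a,b,c] [m1,m2,m3] : ℚ)
        = (s0.ncard : ℚ) + s1.ncard + s2.ncard := by
      have h1 : skewSYTCount [a,b,c] [m1,m2,m3] = s.ncard := by
        rw [skewSYTCount, hP, ← Nat.card_coe_set_eq]
        rfl
      rw [h1, cover, Set.ncard_union_eq hd2 (hfin0.union hfin1) hfin2,
        Set.ncard_union_eq hd01 hfin0 hfin1]
      push_cast
      ring
        -- evaluate each part
    have Eq0 : (s0.ncard : ℚ) = (factorial N : ℚ) *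
        DQ ((a:ℤ)-1) ((b:ℤ)-2) ((c:ℤ)-3) ((m1:ℤ)-1+1) ((m2:ℤ)-2) ((m3:ℤ)-3) := by
      by_cases hA : m1 < a
      · have h0 : cl 0 m1 := by rw [hcl, skewCell_iff]; omega
        have hrm : rcell cl 0 m1 = skewCell [a,b,c] [m1+1,m2,m3] := by
          funext r k
          apply propext
          rw [hcl]
          simp only [rcell, skewCell_iff]
          omega
        have hsum' : [a,b,c].sum - [m1+1,m2,m3].sum = N := by simp; omega
        have w1 : m2 ≤ m1+1 := by omega
        have w2 : m1+1 ≤ a := by omega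
        have w3 : (m1+1) + m2 + m3 + N = a + b + c := by omega
        have hIH := ih a b c (m1+1) m2 m3 hcb hba w1 h32 w2 h2b h3c w3
        have hcr := card_removal cl 0 m1 N h0
          (by intro k hk hc; rw [hcl, skewCell_iff] at hc; omega)
          (by intro r hr; exact absurd hr (by omega))
        have hcount : s0.ncard = skewSYTCount [a,b,c] [m1+1,m2,m3] := by
          rw [hs0def, ← Nat.card_coe_set_eq, skewSYTCount]
          have hiso : IsSkewSYT [a,b,c] [m1+1,m2,m3] = IsTableauOn (rcell cl 0 m1) N := by
            unfold IsSkewSYT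
            rw [hsum', hrm]
          rw [hiso]
          exact hcr
        rw [hcount, hIH]
        have harg : ((m1+1:ℕ):ℤ)-1 = (m1:ℤ)-1+1 := by push_cast; ring
        rw [harg]
      · have hm1a : m1 = a := by omega
        have hempty : s0 = ∅ := by
          ext T
          simp only [hs0def, Set.mem_setOf_eq, Set.mem_empty_iff_false, iff_false, not_and]
          intro hT h1
          have hc := cell_of_one hT h1
          rw [hcl, skewCell_iff] at hc
          omega
        have hD : DQ ((a:ℤ)-1) ((b:ℤ)-2) ((c:ℤ)-3) ((m1:ℤ)-1+1) ((m2:ℤ)-2) ((m3:ℤ)-3) = 0 :=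
          DQ_col1 (by omega) (by omega) (by omega)
        rw [hempty, hD]
        simp
    have Eq1 : (s1.ncard : ℚ) = (factorial N : ℚ) *
        DQ ((a:ℤ)-1) ((b:ℤ)-2) ((c:ℤ)-3) ((m1:ℤ)-1) ((m2:ℤ)-2+1) ((m3:ℤ)-3) := by
      by_cases hB : m2 < b
      · by_cases hC : m2 < m1
        · have h0 : cl 1 m2 := by rw [hcl, skewCell_iff]; omega
          have hrm : rcell cl 1 m2 = skewCell [a,b,c] [m1,m2+1,m3] := by
            funext r k
            apply propext
            rw [hcl]
            simp only [rcell, skewCell_iff]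
            omega
          have hsum' : [a,b,c].sum - [m1,m2+1,m3].sum = N := by simp; omega
          have w1 : m2+1 ≤ m1 := by omega
          have w2 : m3 ≤ m2+1 := by omega
          have w3 : m2+1 ≤ b := by omega
          have w4 : m1 + (m2+1) + m3 + N = a + b + c := by omega
          have hIH := ih a b c m1 (m2+1) m3 hcb hba w1 w2 h1a w3 h3c w4
          have hcr := card_removal cl 1 m2 N h0
            (by intro k hk hc; rw [hcl, skewCell_iff] at hc; omega)
            (by intro r hr hc
                have hr0 : r = 0 := by omega
                subst hr0
                rw [hcl, skewCell_iff] at hc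
                omega)
          have hcount : s1.ncard = skewSYTCount [a,b,c] [m1,m2+1,m3] := by
            rw [hs1def, ← Nat.card_coe_set_eq, skewSYTCount]
            have hiso : IsSkewSYT [a,b,c] [m1,m2+1,m3] = IsTableauOn (rcell cl 1 m2) N := by
              unfold IsSkewSYT
              rw [hsum', hrm]
            rw [hiso]
            exact hcr
          rw [hcount, hIH]
          have harg : ((m2+1:ℕ):ℤ)-2 = (m2:ℤ)-2+1 := by push_cast; ring
          rw [harg]
        · have hm : m2 = m1 := by omega
          have hempty : s1 = ∅ := by
            ext T
            simp only [hs1def, Set.mem_setOf_eq, Set.mem_empty_iff_false, iff_false, not_and]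
            intro hT h1
            exact no_above_of_one hT h1 (by omega) (cell_of_one hT h1)
              (by rw [hcl, skewCell_iff]; omega)
          rw [hempty, DQ_eq12 _ _ _ _ _ _ (by omega)]
          simp
      · have hm : m2 = b := by omega
        have hempty : s1 = ∅ := by
          ext T
          simp only [hs1def, Set.mem_setOf_eq, Set.mem_empty_iff_false, iff_false, not_and]
          intro hT h1
          have hc := cell_of_one hT h1
          rw [hcl, skewCell_iff] at hc
          omega
        have hD : DQ ((a:ℤ)-1) ((b:ℤ)-2) ((c:ℤ)-3) ((m1:ℤ)-1) ((m2:ℤ)-2+1) ((m3:ℤ)-3) = 0 :=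
          DQ_block2 (by omega) (by omega) (by omega) (by omega)
        rw [hempty, hD]
        simp
    have Eq2 : (s2.ncard : ℚ) = (factorial N : ℚ) *
        DQ ((a:ℤ)-1) ((b:ℤ)-2) ((c:ℤ)-3) ((m1:ℤ)-1) ((m2:ℤ)-2) ((m3:ℤ)-3+1) := by
      by_cases hB : m3 < c
      · by_cases hC : m3 < m2
        · have h0 : cl 2 m3 := by rw [hcl, skewCell_iff]; omega
          have hrm : rcell cl 2 m3 = skewCell [a,b,c] [m1,m2,m3+1] := by
            funext r k
            apply propext
            rw [hcl]
            simp only [rcell, skewCell_iff]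
            omega
          have hsum' : [a,b,c].sum - [m1,m2,m3+1].sum = N := by simp; omega
          have w1 : m3+1 ≤ m2 := by omega
          have w2 : m3+1 ≤ c := by omega
          have w3 : m1 + m2 + (m3+1) + N = a + b + c := by omega
          have hIH := ih a b c m1 m2 (m3+1) hcb hba h21 w1 h1a h2b w2 w3
          have hcr := card_removal cl 2 m3 N h0
            (by intro k hk hc; rw [hcl, skewCell_iff] at hc; omega)
            (by intro r hr hc
                have hr1 : r = 1 := by omega
                subst hr1
                rw [hcl, skewCell_iff] at hc
                omega)
          have hcount : s2.ncard = skewSYTCount [a,b,c] [m1,m2,m3+1] := by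
            rw [hs2def, ← Nat.card_coe_set_eq, skewSYTCount]
            have hiso : IsSkewSYT [a,b,c] [m1,m2,m3+1] = IsTableauOn (rcell cl 2 m3) N := by
              unfold IsSkewSYT
              rw [hsum', hrm]
            rw [hiso]
            exact hcr
          rw [hcount, hIH]
          have harg : ((m3+1:ℕ):ℤ)-3 = (m3:ℤ)-3+1 := by push_cast; ring
          rw [harg]
        · have hm : m3 = m2 := by omega
          have hempty : s2 = ∅ := by
            ext T
            simp only [hs2def, Set.mem_setOf_eq, Set.mem_empty_iff_false, iff_false, not_and]
            intro hT h1
            exact no_above_of_one hT h1 (by omega) (cell_of_one hT h1)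
              (by rw [hcl, skewCell_iff]; omega)
          rw [hempty, DQ_eq23 _ _ _ _ _ _ (by omega)]
          simp
      · have hm : m3 = c := by omega
        have hempty : s2 = ∅ := by
          ext T
          simp only [hs2def, Set.mem_setOf_eq, Set.mem_empty_iff_false, iff_false, not_and]
          intro hT h1
          have hc := cell_of_one hT h1
          rw [hcl, skewCell_iff] at hc
          omega
        have hD : DQ ((a:ℤ)-1) ((b:ℤ)-2) ((c:ℤ)-3) ((m1:ℤ)-1) ((m2:ℤ)-2) ((m3:ℤ)-3+1) = 0 :=
          DQ_row3 (by omega) (by omega) (by omega)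
        rw [hempty, hD]
        simp
    -- assemble via the determinant recurrence
    have hstep := DQ_step ((a:ℤ)-1) ((b:ℤ)-2) ((c:ℤ)-3) ((m1:ℤ)-1) ((m2:ℤ)-2) ((m3:ℤ)-3)
    have hNN : ((a:ℤ)-1)+((b:ℤ)-2)+((c:ℤ)-3)-((m1:ℤ)-1)-((m2:ℤ)-2)-((m3:ℤ)-3) = (N:ℤ)+1 := by
      omega
    rw [hNN] at hstep
    rw [hsplit, Eq0, Eq1, Eq2]
    have hfac : (factorial (N+1) : ℚ) = ((N:ℚ)+1) * factorial N := by
      rw [Nat.factorial_succ]; push_cast; ring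
    rw [hfac]
    push_cast at hstep ⊢
    linear_combination (factorial N : ℚ) * hstep

lemma skewSYTCount_pad (n i : ℕ) :
    skewSYTCount [n,n,i] [i-1] = skewSYTCount [n,n,i] [i-1,0,0] := by
  have hc : skewCell [n,n,i] [i-1] = skewCell [n,n,i] [i-1,0,0] := by
    funext r k
    apply propext
    unfold skewCell
    rcases r with _ | _ | _ | r <;> simp [List.getD]
  have hs : ([i-1] : List ℕ).sum = ([i-1,0,0] : List ℕ).sum := by simp
  unfold skewSYTCount IsSkewSYT
  rw [hc, hs]

open Nat (factorial) in
lemma final_eval (n i : ℕ) (hn : 1 ≤ n) (hi1 : 1 ≤ i) (hi2 : i ≤ n) :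
    (factorial (2*n+1) : ℚ) *
      DQ ((n:ℤ)-1) ((n:ℤ)-2) ((i:ℤ)-3) (((i-1:ℕ):ℤ)-1) (((0:ℕ):ℤ)-2) (((0:ℕ):ℤ)-3)
      = ((2*n+1).choose (n-1) : ℚ) * ((n-1).choose (i-1) : ℚ) := by
  have h1 : (n:ℤ)-1-(((i-1:ℕ):ℤ)-1) = ((n-i+1:ℕ):ℤ) := by omega
  have h2 : (n:ℤ)-1-(((0:ℕ):ℤ)-2) = ((n+1:ℕ):ℤ) := by omega
  have h3 : (n:ℤ)-1-(((0:ℕ):ℤ)-3) = ((n+2:ℕ):ℤ) := by omega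
  have h4 : (n:ℤ)-2-(((i-1:ℕ):ℤ)-1) = ((n-i:ℕ):ℤ) := by omega
  have h5 : (n:ℤ)-2-(((0:ℕ):ℤ)-2) = ((n:ℕ):ℤ) := by omega
  have h6 : (n:ℤ)-2-(((0:ℕ):ℤ)-3) = ((n+1:ℕ):ℤ) := by omega
  have h7 : (i:ℤ)-3-(((i-1:ℕ):ℤ)-1) = (-1 : ℤ) := by omega
  have h8 : (i:ℤ)-3-(((0:ℕ):ℤ)-2) = ((i-1:ℕ):ℤ) := by omega
  have h9 : (i:ℤ)-3-(((0:ℕ):ℤ)-3) = ((i:ℕ):ℤ) := by omega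
  have hz : ffQ (-1) = 0 := ffQ_neg (by norm_num)
  unfold DQ
  rw [h1, h2, h3, h4, h5, h6, h7, h8, h9, hz]
  simp only [ffQ_coe]
  -- factorial relations
  have hc1 : (2*n+1).choose (n-1) * factorial (n-1) * factorial (n+2) = factorial (2*n+1) := by
    have h := Nat.choose_mul_factorial_mul_factorial (show n-1 ≤ 2*n+1 by omega)
    rwa [show 2*n+1-(n-1) = n+2 by omega] at h
  have hc2 : (n-1).choose (i-1) * factorial (i-1) * factorial (n-i) = factorial (n-1) := by
    have h := Nat.choose_mul_factorial_mul_factorial (show i-1 ≤ n-1 by omega)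
    rwa [show n-1-(i-1) = n-i by omega] at h
  have f6 : (factorial (2*n+1) : ℚ)
      = ((2*n+1).choose (n-1) : ℚ) * (factorial (n-1) : ℚ) * (factorial (n+2) : ℚ) := by
    exact_mod_cast (congrArg (fun x : ℕ => (x : ℚ)) hc1).symm
  have f7 : (factorial (n-1) : ℚ)
      = ((n-1).choose (i-1) : ℚ) * (factorial (i-1) : ℚ) * (factorial (n-i) : ℚ) := by
    exact_mod_cast (congrArg (fun x : ℕ => (x : ℚ)) hc2).symm
  have f1 : (factorial (n-i+1) : ℚ) = ((n:ℚ)-(i:ℚ)+1) * (factorial (n-i) : ℚ) := by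
    rw [Nat.factorial_succ]
    have : ((n-i:ℕ):ℚ) = (n:ℚ)-(i:ℚ) := by
      rw [Nat.cast_sub hi2]
    push_cast
    rw [this]
  have f2 : (factorial i : ℚ) = (i:ℚ) * (factorial (i-1) : ℚ) := by
    have := Nat.mul_factorial_pred (show i ≠ 0 by omega)
    exact_mod_cast (congrArg (fun x : ℕ => (x : ℚ)) this).symm
  have f3 : (factorial n : ℚ) = (n:ℚ) * (factorial (n-1) : ℚ) := by
    have := Nat.mul_factorial_pred (show n ≠ 0 by omega)
    exact_mod_cast (congrArg (fun x : ℕ => (x : ℚ)) this).symm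
  have f4 : (factorial (n+1) : ℚ) = ((n:ℚ)+1) * (factorial n : ℚ) := by
    rw [Nat.factorial_succ]; push_cast; ring
  have f5 : (factorial (n+2) : ℚ) = ((n:ℚ)+2) * (factorial (n+1) : ℚ) := by
    rw [show n+2 = (n+1)+1 from rfl, Nat.factorial_succ]; push_cast; ring
  rw [f6, f1, f2, f5, f4, f3, f7]
  have hA : ((factorial (n-i) : ℕ) : ℚ) ≠ 0 := Nat.cast_ne_zero.mpr (Nat.factorial_pos _).ne'
  have hB : ((factorial (i-1) : ℕ) : ℚ) ≠ 0 := Nat.cast_ne_zero.mpr (Nat.factorial_pos _).ne'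
  have hCi : ((n-1).choose (i-1) : ℚ) ≠ 0 :=
    Nat.cast_ne_zero.mpr (Nat.choose_pos (by omega)).ne'
  have hni : ((n:ℚ)-(i:ℚ)+1) ≠ 0 := by
    have : (i:ℚ) ≤ (n:ℚ) := by exact_mod_cast hi2
    linarith
  have hnn : (n:ℚ) ≠ 0 := by
    have : (1:ℚ) ≤ (n:ℚ) := by exact_mod_cast hn
    linarith
  have hii : (i:ℚ) ≠ 0 := by
    have : (1:ℚ) ≤ (i:ℚ) := by exact_mod_cast hi1
    linarith
  have hn1 : ((n:ℚ)+1) ≠ 0 := by positivity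
  have hn2 : ((n:ℚ)+2) ≠ 0 := by positivity
  field_simp
  ring

/-- `f^{(n,n,i)/(i-1)} = binom(2n+1, n-1) · binom(n-1, i-1)`. -/
theorem skewSYTCount_nni (n i : ℕ) (hn : 1 ≤ n) (hi1 : 1 ≤ i) (hi2 : i ≤ n) :
    skewSYTCount [n, n, i] [i - 1] = (2 * n + 1).choose (n - 1) * (n - 1).choose (i - 1) := by
  have w1 : (0:ℕ) ≤ i-1 := by omega
  have w2 : (0:ℕ) ≤ 0 := le_refl 0
  have w3 : i-1 ≤ n := by omega
  have w4 : (0:ℕ) ≤ n := by omega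
  have w5 : (0:ℕ) ≤ i := by omega
  have w6 : (i-1) + 0 + 0 + (2*n+1) = n + n + i := by omega
  have key := aitken3 (2*n+1) n n i (i-1) 0 0 hi2 (le_refl n) w1 w2 w3 w4 w5 w6
  have hQ : (skewSYTCount [n,n,i] [i-1,0,0] : ℚ)
      = (((2*n+1).choose (n-1) * (n-1).choose (i-1) : ℕ) : ℚ) := by
    rw [key, final_eval n i hn hi1 hi2]
    push_cast
    ring
  rw [skewSYTCount_pad n i]
  exact_mod_cast hQ
end

section
/- For n ≥ 1 and 1 ≤ i ≤ n, the quantity |𝓜_{2n+1,2i}| is symmetric in i: |𝓜_{2n+1,2i}| = |𝓜_{2n+1,2(n−i+1)}|. -/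
/-! ### Auxiliary: reverse-complement involution -/

/-- Reverse-complement of a word whose entries lie in `[1,N]`. -/
def rcWord (N : ℕ) (w : List ℕ) : List ℕ := (w.map (fun x => N + 1 - x)).reverse

@[simp] lemma rcWord_length (N : ℕ) (w : List ℕ) : (rcWord N w).length = w.length := by
  simp [rcWord]

lemma rcWord_getD (N : ℕ) (w : List ℕ) {p : ℕ} (hp : p < w.length) :
    (rcWord N w).getD p 0 = N + 1 - w.getD (w.length - 1 - p) 0 := by
  have h1 : p < (rcWord N w).length := by simpa using hp
  have h2 : w.length - 1 - p < w.length := by omega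
  rw [List.getD_eq_getElem _ _ h1, List.getD_eq_getElem _ _ h2]
  simp [rcWord]

lemma getD_mem {w : List ℕ} {k : ℕ} (hk : k < w.length) : w.getD k 0 ∈ w := by
  rw [List.getD_eq_getElem _ _ hk]; exact List.getElem_mem _

lemma rcWord_rcWord (N : ℕ) (w : List ℕ) (hw : ∀ x ∈ w, 1 ≤ x ∧ x ≤ N) :
    rcWord N (rcWord N w) = w := by
  unfold rcWord
  rw [List.map_reverse, List.reverse_reverse, List.map_map]
  conv_rhs => rw [← List.map_id w]
  apply List.map_congr_left
  intro x hx
  have := hw x hx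
  simp only [Function.comp_apply, id]
  omega

lemma isPermWord_rcWord (N : ℕ) (w : List ℕ) (hw : IsPermWord N w) :
    IsPermWord N (rcWord N w) := by
  obtain ⟨hlen, hnd, hmem⟩ := hw
  refine ⟨by simpa using hlen, ?_, ?_⟩
  · unfold rcWord
    rw [List.nodup_reverse]
    exact hnd.map_on (fun x hx y hy h => by
      have hx' := hmem x hx; have hy' := hmem y hy; omega)
  · intro x hx
    simp only [rcWord, List.mem_reverse, List.mem_map] at hx
    obtain ⟨y, hy, rfl⟩ := hx
    have := hmem y hy
    omega

lemma descentAt_rcWord (N : ℕ) (w : List ℕ) (hw : ∀ x ∈ w, 1 ≤ x ∧ x ≤ N) (j : ℕ) :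
    DescentAt (rcWord N w) j ↔ DescentAt w (w.length - j) := by
  unfold DescentAt
  simp only [rcWord_length]
  constructor
  · rintro ⟨h1, h2, h3⟩
    have hj : j < w.length := by omega
    have hj1 : j - 1 < w.length := by omega
    rw [rcWord_getD N w hj, rcWord_getD N w hj1] at h3
    have e1 : w.length - 1 - j = w.length - j - 1 := by omega
    have e2 : w.length - 1 - (j - 1) = w.length - j := by omega
    rw [e1, e2] at h3
    have ha := hw _ (getD_mem (show w.length - j - 1 < w.length by omega))
    have hb := hw _ (getD_mem (show w.length - j < w.length by omega))
    refine ⟨by omega, by omega, ?_⟩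
    have e3 : w.length - j - 1 = w.length - j - 1 := rfl
    omega
  · rintro ⟨h1, h2, h3⟩
    have hb1 : 1 ≤ j := by omega
    have hb2 : j + 1 ≤ w.length := by omega
    have hj : j < w.length := by omega
    have hj1 : j - 1 < w.length := by omega
    refine ⟨hb1, hb2, ?_⟩
    rw [rcWord_getD N w hj, rcWord_getD N w hj1]
    have e1 : w.length - 1 - j = w.length - j - 1 := by omega
    have e2 : w.length - 1 - (j - 1) = w.length - j := by omega
    rw [e1, e2]
    have ha := hw _ (getD_mem (show w.length - j - 1 < w.length by omega))
    have hb := hw _ (getD_mem (show w.length - j < w.length by omega))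
    omega

lemma descents_card_rcWord (N : ℕ) (w : List ℕ) (hw : ∀ x ∈ w, 1 ≤ x ∧ x ≤ N) :
    (descents (rcWord N w)).card = (descents w).card := by
  apply Finset.card_bij' (fun j _ => w.length - j) (fun i _ => w.length - i)
  · intro j hj
    simp only [descents, Finset.mem_filter, Finset.mem_range, rcWord_length] at hj ⊢
    rw [descentAt_rcWord N w hw] at hj
    obtain ⟨hr, ha, hb, hc⟩ := hj
    exact ⟨by omega, ha, hb, hc⟩
  · intro i hi
    simp only [descents, Finset.mem_filter, Finset.mem_range, rcWord_length] at hi ⊢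
    have hb := hi.2
    obtain ⟨h1, h2, -⟩ := hb
    rw [descentAt_rcWord N w hw]
    have e : w.length - (w.length - i) = i := by omega
    rw [e]
    exact ⟨by omega, hi.2⟩
  · intro j hj
    simp only [descents, Finset.mem_filter, Finset.mem_range] at hj
    rw [descentAt_rcWord N w hw] at hj
    obtain ⟨-, h1, h2, -⟩ := hj
    omega
  · intro i hi
    simp only [descents, Finset.mem_filter, Finset.mem_range] at hi
    obtain ⟨-, h1, h2, -⟩ := hi
    omega

lemma sameRelOrder_rcWord (N M : ℕ) {s σ : List ℕ}
    (hs : ∀ x ∈ s, 1 ≤ x ∧ x ≤ N) (hσ : ∀ x ∈ σ, 1 ≤ x ∧ x ≤ M)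
    (h : SameRelOrder s σ) : SameRelOrder (rcWord N s) (rcWord M σ) := by
  obtain ⟨hlen, hrel⟩ := h
  refine ⟨by simp [hlen], ?_⟩
  intro p q hp hq
  simp only [rcWord_length] at hp hq
  rw [rcWord_getD N s hp, rcWord_getD N s hq,
      rcWord_getD M σ (hlen ▸ hp), rcWord_getD M σ (hlen ▸ hq)]
  have hp' : s.length - 1 - p < s.length := by omega
  have hq' : s.length - 1 - q < s.length := by omega
  have ha := hs _ (getD_mem hp')
  have hb := hs _ (getD_mem hq')
  have ha' := hσ _ (getD_mem (show s.length - 1 - p < σ.length by omega))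
  have hb' := hσ _ (getD_mem (show s.length - 1 - q < σ.length by omega))
  have key := hrel (s.length - 1 - q) (s.length - 1 - p) hq' hp'
  have e1 : σ.length - 1 - p = s.length - 1 - p := by omega
  have e2 : σ.length - 1 - q = s.length - 1 - q := by omega
  rw [e1, e2]
  omega

lemma sublist_rcWord (N : ℕ) {s w : List ℕ} (h : s.Sublist w) :
    (rcWord N s).Sublist (rcWord N w) :=
  (h.map _).reverse

lemma containsPattern_rcWord (N M : ℕ) {σ w : List ℕ}
    (hw : ∀ x ∈ w, 1 ≤ x ∧ x ≤ N) (hσ : ∀ x ∈ σ, 1 ≤ x ∧ x ≤ M)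
    (h : ContainsPattern σ (rcWord N w)) : ContainsPattern (rcWord M σ) w := by
  obtain ⟨s, hsub, hrel⟩ := h
  have hs : ∀ x ∈ s, 1 ≤ x ∧ x ≤ N := by
    intro x hx
    have hx' : x ∈ rcWord N w := hsub.mem hx
    simp only [rcWord, List.mem_reverse, List.mem_map] at hx'
    obtain ⟨y, hy, rfl⟩ := hx'
    have := hw y hy; omega
  refine ⟨rcWord N s, ?_, sameRelOrder_rcWord N M hs hσ hrel⟩
  have := sublist_rcWord N hsub
  rwa [rcWord_rcWord N w hw] at this

lemma minimalPerm_rcWord (N d : ℕ) (w : List ℕ) (hw : IsPermWord N w)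
    (h : MinimalPerm d w) : MinimalPerm d (rcWord N w) := by
  obtain ⟨hcard, hpat⟩ := h
  refine ⟨by rw [descents_card_rcWord N w hw.2.2]; exact hcard, ?_⟩
  intro m σ hσ hm hd hcont
  have hσ' := isPermWord_rcWord m σ hσ
  have hd' : (descents (rcWord m σ)).card = d := by
    rw [descents_card_rcWord m σ hσ.2.2]; exact hd
  have hm' : m < w.length := by simpa using hm
  exact hpat m (rcWord m σ) hσ' hm' hd'
    (containsPattern_rcWord N m hw.2.2 hσ.2.2 hcont)

lemma mem_Mset_rcWord (n i : ℕ) (hi1 : 1 ≤ i) (hi2 : i ≤ n) {w : List ℕ}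
    (hw : w ∈ Mset n i) : rcWord (2 * n + 1) w ∈ Mset n (n - i + 1) := by
  obtain ⟨hperm, hmin, hd1, hd2, huniq⟩ := hw
  have hL : w.length = 2 * n + 1 := hperm.1
  have hmem := hperm.2.2
  refine ⟨isPermWord_rcWord _ w hperm, minimalPerm_rcWord _ _ w hperm hmin, ?_, ?_, ?_⟩
  · rw [descentAt_rcWord _ w hmem, hL,
      show 2 * n + 1 - (2 * (n - i + 1) - 1) = 2 * i by omega]
    exact hd2
  · rw [descentAt_rcWord _ w hmem, hL,
      show 2 * n + 1 - 2 * (n - i + 1) = 2 * i - 1 by omega]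
    exact hd1
  · intro j h1 h2
    rw [descentAt_rcWord _ w hmem] at h1 h2
    have hb1 := h1.1
    have hb2 := h1.2.1
    have hb3 := h2.1
    have hb4 := h2.2.1
    have := huniq (w.length - (j + 1)) h2 (by
      rw [show w.length - (j + 1) + 1 = w.length - j by omega]; exact h1)
    omega

/-- `|𝓜_{2n+1,2i}|` is symmetric in `i`:
`|𝓜_{2n+1,2i}| = |𝓜_{2n+1,2(n-i+1)}|`. -/
theorem Mset_card_symm (n i : ℕ) (hn : 1 ≤ n) (hi1 : 1 ≤ i) (hi2 : i ≤ n) :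
    (Mset n i).ncard = (Mset n (n - i + 1)).ncard := by
  have hinj : Set.InjOn (rcWord (2 * n + 1)) (Mset n i) := by
    intro u hu v hv h
    have hu' := rcWord_rcWord (2 * n + 1) u hu.1.2.2
    have hv' := rcWord_rcWord (2 * n + 1) v hv.1.2.2
    rw [← hu', ← hv', h]
  have himg : rcWord (2 * n + 1) '' (Mset n i) = Mset n (n - i + 1) := by
    apply Set.Subset.antisymm
    · rintro _ ⟨w, hw, rfl⟩
      exact mem_Mset_rcWord n i hi1 hi2 hw
    · intro w hw
      refine ⟨rcWord (2 * n + 1) w, ?_, rcWord_rcWord (2 * n + 1) w hw.1.2.2⟩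
      have := mem_Mset_rcWord n (n - i + 1) (by omega) (by omega) hw
      rwa [show n - (n - i + 1) + 1 = i by omega] at this
  rw [← himg, Set.ncard_image_of_injOn hinj]
end

section
/- For 2 ≤ k ≤ ⌊(n+1)/2⌋, the number of standard Young tableaux of shape (n, n+1−k, k) (size 2n+1) equals |𝓣_{2n+1,k}| = ((n−2k+2)/(k−1))·binom(n−1, k−2)·binom(2n+1, n−1). -/
/-! ### Auxiliary development for the SYT count -/

lemma skewCell_iff_s17 (l : List ℕ) (r x : ℕ) :
    skewCell l [] r x ↔ r < l.length ∧ x < l.getD r 0 := by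
  simp [skewCell]

lemma getD_le_sum (l : List ℕ) (r : ℕ) : l.getD r 0 ≤ l.sum := by
  by_cases h : r < l.length
  · rw [List.getD_eq_getElem l 0 h]
    exact List.single_le_sum (fun _ _ => Nat.zero_le _) _ (List.getElem_mem h)
  · rw [List.getD_eq_default l 0 (by omega)]
    exact Nat.zero_le _

lemma sytSet_finite (l : List ℕ) : {T : ℕ → ℕ → ℕ | IsSkewSYT l [] T}.Finite := by
  set S := {T : ℕ → ℕ → ℕ | IsSkewSYT l [] T}
  set N := l.sum with hN
  have hbound : ∀ T ∈ S, ∀ r x, T r x ≤ N := by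
    intro T hT r x
    obtain ⟨h0, h1, -⟩ := hT
    by_cases h : skewCell l [] r x
    · exact ((h1 r x h).2).trans (by simp [hN])
    · simp [h0 r x h]
  have hfin : (Set.pi (Set.univ : Set (Fin l.length))
      (fun _ => Set.pi (Set.univ : Set (Fin N)) (fun _ => Set.Iic N))).Finite :=
    Set.Finite.pi (fun _ => Set.Finite.pi (fun _ => Set.finite_Iic N))
  apply Set.Finite.of_finite_image (f := fun T (r : Fin l.length) (x : Fin N) => T r x)
  · apply hfin.subset
    rintro g ⟨T, hT, rfl⟩
    intro r _
    intro x _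
    exact hbound T hT r x
  · intro T1 h1 T2 h2 heq
    funext r x
    by_cases h : skewCell l [] r x
    · obtain ⟨hr, hx⟩ := (skewCell_iff_s17 l r x).1 h
      have hxN : x < N := lt_of_lt_of_le hx (getD_le_sum l r)
      exact congrFun (congrFun heq ⟨r, hr⟩) ⟨x, hxN⟩
    · rw [h1.1 r x h, h2.1 r x h]
lemma IsSkewSYT_iff (l : List ℕ) (T : ℕ → ℕ → ℕ) :
    IsSkewSYT l [] T ↔ IsTableauOn (skewCell l []) l.sum T := by
  simp [IsSkewSYT]

/-- Put value `N` into the cell `(r₀, e-1)`. -/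
def cornerAdd (r₀ e N : ℕ) (T : ℕ → ℕ → ℕ) : ℕ → ℕ → ℕ :=
  fun r x => if r = r₀ ∧ x = e - 1 then N else T r x

lemma cornerAdd_pos (r₀ e N : ℕ) (T : ℕ → ℕ → ℕ) (r x : ℕ) (h1 : r = r₀)
    (h2 : x = e - 1) : cornerAdd r₀ e N T r x = N := by
  simp only [cornerAdd]
  rw [if_pos ⟨h1, h2⟩]

lemma cornerAdd_neg (r₀ e N : ℕ) (T : ℕ → ℕ → ℕ) (r x : ℕ)
    (h : ¬(r = r₀ ∧ x = e - 1)) : cornerAdd r₀ e N T r x = T r x := by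
  simp only [cornerAdd]
  rw [if_neg h]

lemma corner_ncard (l l' : List ℕ) (r₀ : ℕ) (hr : r₀ < l.length)
    (he : 1 ≤ l.getD r₀ 0) (hcorner : l.getD (r₀ + 1) 0 < l.getD r₀ 0)
    (hlen : l'.length = l.length)
    (hgetD : ∀ r, l'.getD r 0 = if r = r₀ then l.getD r₀ 0 - 1 else l.getD r 0)
    (hsum : l'.sum + 1 = l.sum) :
    {T : ℕ → ℕ → ℕ | IsSkewSYT l [] T ∧ T r₀ (l.getD r₀ 0 - 1) = l.sum}.ncard
      = {T : ℕ → ℕ → ℕ | IsSkewSYT l' [] T}.ncard := by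
  obtain ⟨e, hee⟩ : ∃ e, l.getD r₀ 0 = e := ⟨_, rfl⟩
  obtain ⟨N, hNN⟩ : ∃ N, l.sum = N := ⟨_, rfl⟩
  rw [hee] at he hcorner ⊢
  rw [hNN] at hsum ⊢
  simp only [hee] at hgetD
  have hN' : l'.sum = N - 1 := by omega
  have hN1 : 1 ≤ N := by have := getD_le_sum l r₀; omega
  have hcell' : ∀ r x, skewCell l' [] r x ↔
      (skewCell l [] r x ∧ ¬(r = r₀ ∧ x = e - 1)) := by
    intro r x
    rw [skewCell_iff_s17, skewCell_iff_s17, hlen, hgetD r]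
    rcases eq_or_ne r r₀ with rfl | h
    · rw [if_pos rfl, hee]
      constructor
      · rintro ⟨h1, h2⟩
        refine ⟨⟨h1, by omega⟩, ?_⟩
        rintro ⟨-, rfl⟩
        omega
      · rintro ⟨⟨h1, h2⟩, h3⟩
        refine ⟨h1, ?_⟩
        have : x ≠ e - 1 := fun hx => h3 ⟨rfl, hx⟩
        omega
    · rw [if_neg h]
      exact ⟨fun h1 => ⟨h1, fun hx => h hx.1⟩, fun h1 => h1.1⟩
  have hcc : skewCell l [] r₀ (e - 1) :=
    (skewCell_iff_s17 l r₀ (e - 1)).2 ⟨hr, by rw [hee]; omega⟩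
  have himg : {T : ℕ → ℕ → ℕ | IsSkewSYT l [] T ∧ T r₀ (e - 1) = N}
      = (cornerAdd r₀ e N) '' {T : ℕ → ℕ → ℕ | IsSkewSYT l' [] T} := by
    ext T
    simp only [Set.mem_setOf_eq, Set.mem_image]
    constructor
    · rintro ⟨hT, hTc⟩
      rw [IsSkewSYT_iff, hNN] at hT
      obtain ⟨h0, h1, h2, h3, h4, h5⟩ := hT
      have hlt : ∀ r x, skewCell l [] r x → ¬(r = r₀ ∧ x = e - 1) → T r x < N := by
        intro r x hcell hne
        have hb := h1 r x hcell
        rcases Nat.lt_or_ge (T r x) N with h | h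
        · exact h
        · have hTN : T r x = N := by omega
          have := h2 r x r₀ (e - 1) hcell hcc (by rw [hTN, hTc])
          exact absurd ⟨this.1, this.2⟩ hne
      refine ⟨fun r x => if r = r₀ ∧ x = e - 1 then 0 else T r x, ?_, ?_⟩
      · rw [IsSkewSYT_iff, hN']
        refine ⟨?_, ?_, ?_, ?_, ?_, ?_⟩
        · intro r x hc
          by_cases h : r = r₀ ∧ x = e - 1
          · simp [h]
          · simp only [if_neg h]
            refine h0 r x fun hcl => hc ((hcell' r x).2 ⟨hcl, h⟩)
        · intro r x hc
          rw [hcell'] at hc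
          simp only [if_neg hc.2]
          have := h1 r x hc.1
          have := hlt r x hc.1 hc.2
          omega
        · intro r x r' x' hc hc' hval
          rw [hcell'] at hc hc'
          simp only [if_neg hc.2, if_neg hc'.2] at hval
          exact h2 r x r' x' hc.1 hc'.1 hval
        · intro v hv1 hv2
          obtain ⟨r, x, hc, hval⟩ := h3 v hv1 (by omega)
          have hne : ¬(r = r₀ ∧ x = e - 1) := by
            rintro ⟨rfl, rfl⟩
            omega
          exact ⟨r, x, (hcell' r x).2 ⟨hc, hne⟩, by simp [if_neg hne, hval]⟩
        · intro r x hc hc'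
          rw [hcell'] at hc hc'
          simp only [if_neg hc.2, if_neg hc'.2]
          exact h4 r x hc.1 hc'.1
        · intro r x hc hc'
          rw [hcell'] at hc hc'
          simp only [if_neg hc.2, if_neg hc'.2]
          exact h5 r x hc.1 hc'.1
      · funext r x
        by_cases h : r = r₀ ∧ x = e - 1
        · rw [cornerAdd_pos r₀ e N _ r x h.1 h.2, h.1, h.2]
          exact hTc.symm
        · rw [cornerAdd_neg r₀ e N _ r x h]
          simp only [if_neg h]
    · rintro ⟨T', hT', rfl⟩
      rw [IsSkewSYT_iff, hN'] at hT'
      obtain ⟨h0, h1, h2, h3, h4, h5⟩ := hT'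
      have hcorner_notcell : ¬ skewCell l [] (r₀ + 1) (e - 1) := by
        rw [skewCell_iff_s17]
        rintro ⟨-, h⟩
        omega
      have hright_notcell : ¬ skewCell l [] r₀ (e - 1 + 1) := by
        rw [skewCell_iff_s17, hee]
        rintro ⟨-, h⟩
        omega
      refine ⟨?_, cornerAdd_pos r₀ e N T' r₀ (e - 1) rfl rfl⟩
      rw [IsSkewSYT_iff, hNN]
      refine ⟨?_, ?_, ?_, ?_, ?_, ?_⟩
      · intro r x hc
        have hne : ¬(r = r₀ ∧ x = e - 1) := by
          rintro ⟨rfl, rfl⟩; exact hc hcc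
        rw [cornerAdd_neg r₀ e N T' r x hne]
        exact h0 r x fun hcl => hc ((hcell' r x).1 hcl).1
      · intro r x hc
        by_cases h : r = r₀ ∧ x = e - 1
        · rw [cornerAdd_pos r₀ e N T' r x h.1 h.2]; omega
        · rw [cornerAdd_neg r₀ e N T' r x h]
          have := h1 r x ((hcell' r x).2 ⟨hc, h⟩)
          omega
      · intro r x r' x' hc hc' hval
        by_cases h : r = r₀ ∧ x = e - 1 <;> by_cases h' : r' = r₀ ∧ x' = e - 1
        · exact ⟨by rw [h.1, h'.1], by rw [h.2, h'.2]⟩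
        · rw [cornerAdd_neg r₀ e N T' r' x' h', cornerAdd_pos r₀ e N T' r x h.1 h.2] at hval
          have := h1 r' x' ((hcell' r' x').2 ⟨hc', h'⟩)
          omega
        · rw [cornerAdd_neg r₀ e N T' r x h, cornerAdd_pos r₀ e N T' r' x' h'.1 h'.2] at hval
          have := h1 r x ((hcell' r x).2 ⟨hc, h⟩)
          omega
        · rw [cornerAdd_neg r₀ e N T' r x h, cornerAdd_neg r₀ e N T' r' x' h'] at hval
          exact h2 r x r' x' ((hcell' r x).2 ⟨hc, h⟩) ((hcell' r' x').2 ⟨hc', h'⟩) hval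
      · intro v hv1 hv2
        rcases Nat.lt_or_ge v N with hvN | hvN
        · obtain ⟨r, x, hc, hval⟩ := h3 v hv1 (by omega)
          have hne := ((hcell' r x).1 hc).2
          exact ⟨r, x, ((hcell' r x).1 hc).1,
            by rw [cornerAdd_neg r₀ e N T' r x hne]; exact hval⟩
        · have hvv : v = N := by omega
          exact ⟨r₀, e - 1, hcc, by rw [cornerAdd_pos r₀ e N T' r₀ (e - 1) rfl rfl, hvv]⟩
      · intro r x hc hc'
        have h1c : ¬(r = r₀ ∧ x = e - 1) := by
          rintro ⟨rfl, rfl⟩; exact hright_notcell hc'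
        by_cases h2c : r = r₀ ∧ x + 1 = e - 1
        · rw [cornerAdd_pos r₀ e N T' r (x + 1) h2c.1 h2c.2,
            cornerAdd_neg r₀ e N T' r x h1c]
          have := h1 r x ((hcell' r x).2 ⟨hc, h1c⟩)
          omega
        · rw [cornerAdd_neg r₀ e N T' r x h1c, cornerAdd_neg r₀ e N T' r (x + 1) h2c]
          exact h4 r x ((hcell' r x).2 ⟨hc, h1c⟩) ((hcell' r (x + 1)).2 ⟨hc', h2c⟩)
      · intro r x hc hc'
        have h1c : ¬(r = r₀ ∧ x = e - 1) := by
          rintro ⟨rfl, rfl⟩; exact hcorner_notcell hc'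
        by_cases h2c : r + 1 = r₀ ∧ x = e - 1
        · rw [cornerAdd_pos r₀ e N T' (r + 1) x h2c.1 h2c.2,
            cornerAdd_neg r₀ e N T' r x h1c]
          have := h1 r x ((hcell' r x).2 ⟨hc, h1c⟩)
          omega
        · rw [cornerAdd_neg r₀ e N T' r x h1c, cornerAdd_neg r₀ e N T' (r + 1) x h2c]
          exact h5 r x ((hcell' r x).2 ⟨hc, h1c⟩) ((hcell' (r + 1) x).2 ⟨hc', h2c⟩)
  have hinj : Set.InjOn (cornerAdd r₀ e N) {T : ℕ → ℕ → ℕ | IsSkewSYT l' [] T} := by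
    intro T1 hT1 T2 hT2 heq
    have notcell' : ¬ skewCell l' [] r₀ (e - 1) := by
      rw [hcell']
      rintro ⟨-, h⟩
      exact h ⟨rfl, rfl⟩
    funext r x
    by_cases h : r = r₀ ∧ x = e - 1
    · rw [h.1, h.2]
      rw [((IsSkewSYT_iff _ _).1 hT1).1 r₀ (e - 1) notcell',
        ((IsSkewSYT_iff _ _).1 hT2).1 r₀ (e - 1) notcell']
    · have h12 := congrFun (congrFun heq r) x
      rwa [cornerAdd_neg r₀ e N T1 r x h, cornerAdd_neg r₀ e N T2 r x h] at h12
  rw [himg, Set.ncard_image_of_injOn hinj]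
lemma cell3_iff (a b c r x : ℕ) : skewCell [a, b, c] [] r x ↔
    (r = 0 ∧ x < a) ∨ (r = 1 ∧ x < b) ∨ (r = 2 ∧ x < c) := by
  rw [skewCell_iff_s17]
  rcases r with _ | _ | _ | r <;>
    simp [List.getD_cons_zero, List.getD_cons_succ, List.getD]

lemma sum3 (a b c : ℕ) : ([a, b, c] : List ℕ).sum = a + b + c := by
  simp; ring

/-- The set of SYT of `l` whose maximal entry sits at the end of row `r₀`. -/
def cornerSet (l : List ℕ) (r₀ : ℕ) : Set (ℕ → ℕ → ℕ) :=
  {T | IsSkewSYT l [] T ∧ T r₀ (l.getD r₀ 0 - 1) = l.sum}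

lemma sset_rec (a b c : ℕ) (hab : b ≤ a) (hbc : c ≤ b) (hpos : 1 ≤ a + b + c) :
    ({T : ℕ → ℕ → ℕ | IsSkewSYT [a, b, c] [] T}).ncard
      = (if b < a then ({T : ℕ → ℕ → ℕ | IsSkewSYT [a - 1, b, c] [] T}).ncard else 0)
      + (if c < b then ({T : ℕ → ℕ → ℕ | IsSkewSYT [a, b - 1, c] [] T}).ncard else 0)
      + (if 0 < c then ({T : ℕ → ℕ → ℕ | IsSkewSYT [a, b, c - 1] [] T}).ncard else 0) := by
  have hcellpos : ∀ T : ℕ → ℕ → ℕ, IsSkewSYT [a, b, c] [] T → ∀ r x, 1 ≤ T r x →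
      skewCell [a, b, c] [] r x := by
    intro T hT r x hv
    by_contra hc
    rw [((IsSkewSYT_iff _ _).1 hT).1 r x hc] at hv
    omega
  have hga : ([a, b, c] : List ℕ).getD 0 0 = a := rfl
  have hgb : ([a, b, c] : List ℕ).getD 1 0 = b := rfl
  have hgc : ([a, b, c] : List ℕ).getD 2 0 = c := rfl
  have hmem : ∀ (T : ℕ → ℕ → ℕ) (r : ℕ),
      T ∈ cornerSet [a, b, c] r ↔ IsSkewSYT [a, b, c] [] T ∧
        T r (([a, b, c] : List ℕ).getD r 0 - 1) = a + b + c := by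
    intro T r
    rw [show (T ∈ cornerSet [a, b, c] r) ↔ (IsSkewSYT [a, b, c] [] T ∧
      T r (([a, b, c] : List ℕ).getD r 0 - 1) = ([a, b, c] : List ℕ).sum) from Iff.rfl,
      sum3]
  -- the union decomposition
  have hu : {T : ℕ → ℕ → ℕ | IsSkewSYT [a, b, c] [] T}
      = cornerSet [a, b, c] 0 ∪ cornerSet [a, b, c] 1 ∪ cornerSet [a, b, c] 2 := by
    ext T
    simp only [Set.mem_setOf_eq, Set.mem_union, hmem, hga, hgb, hgc]
    constructor
    · intro hT
      obtain ⟨h0, h1, h2, h3, h4, h5⟩ := (IsSkewSYT_iff _ _).1 hT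
      obtain ⟨r, x, hc, hval⟩ := h3 ([a, b, c] : List ℕ).sum
        (by rw [sum3]; omega) le_rfl
      rw [sum3] at hval
      rw [cell3_iff] at hc
      rcases hc with ⟨rfl, hx⟩ | ⟨rfl, hx⟩ | ⟨rfl, hx⟩
      · left; left
        refine ⟨hT, ?_⟩
        have hxa : x = a - 1 := by
          by_contra hne
          have hcell : skewCell [a, b, c] [] 0 (x + 1) :=
            (cell3_iff a b c 0 (x + 1)).2 (Or.inl ⟨rfl, by omega⟩)
          have := h4 0 x ((cell3_iff a b c 0 x).2 (Or.inl ⟨rfl, hx⟩)) hcell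
          have := (h1 0 (x + 1) hcell).2
          rw [sum3] at this
          omega
        rw [← hxa]; exact hval
      · left; right
        refine ⟨hT, ?_⟩
        have hxa : x = b - 1 := by
          by_contra hne
          have hcell : skewCell [a, b, c] [] 1 (x + 1) :=
            (cell3_iff a b c 1 (x + 1)).2 (Or.inr (Or.inl ⟨rfl, by omega⟩))
          have := h4 1 x ((cell3_iff a b c 1 x).2 (Or.inr (Or.inl ⟨rfl, hx⟩))) hcell
          have := (h1 1 (x + 1) hcell).2
          rw [sum3] at this
          omega
        rw [← hxa]; exact hval
      · right
        refine ⟨hT, ?_⟩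
        have hxa : x = c - 1 := by
          by_contra hne
          have hcell : skewCell [a, b, c] [] 2 (x + 1) :=
            (cell3_iff a b c 2 (x + 1)).2 (Or.inr (Or.inr ⟨rfl, by omega⟩))
          have := h4 2 x ((cell3_iff a b c 2 x).2 (Or.inr (Or.inr ⟨rfl, hx⟩))) hcell
          have := (h1 2 (x + 1) hcell).2
          rw [sum3] at this
          omega
        rw [← hxa]; exact hval
    · rintro ((⟨hT, -⟩ | ⟨hT, -⟩) | ⟨hT, -⟩) <;> exact hT
  -- disjointness helper
  have hkey : ∀ (T : ℕ → ℕ → ℕ) (r x r' x' : ℕ), IsSkewSYT [a, b, c] [] T →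
      T r x = a + b + c → T r' x' = a + b + c → r = r' ∧ x = x' := by
    intro T r x r' x' hT hv hv'
    have h2 := ((IsSkewSYT_iff _ _).1 hT).2.2.1
    refine h2 r x r' x' ?_ ?_ (by rw [hv, hv'])
    · exact hcellpos T hT r x (by omega)
    · exact hcellpos T hT r' x' (by omega)
  have hfin := sytSet_finite [a, b, c]
  have hf0 : (cornerSet [a, b, c] 0).Finite := hfin.subset (fun T hT => hT.1)
  have hf1 : (cornerSet [a, b, c] 1).Finite := hfin.subset (fun T hT => hT.1)
  have hf2 : (cornerSet [a, b, c] 2).Finite := hfin.subset (fun T hT => hT.1)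
  have hd01 : Disjoint (cornerSet [a, b, c] 0) (cornerSet [a, b, c] 1) := by
    rw [Set.disjoint_left]
    intro T h0 h1
    rw [hmem] at h0 h1
    exact absurd (hkey T 0 _ 1 _ h0.1 h0.2 h1.2).1 (by omega)
  have hd02 : Disjoint (cornerSet [a, b, c] 0) (cornerSet [a, b, c] 2) := by
    rw [Set.disjoint_left]
    intro T h0 h1
    rw [hmem] at h0 h1
    exact absurd (hkey T 0 _ 2 _ h0.1 h0.2 h1.2).1 (by omega)
  have hd12 : Disjoint (cornerSet [a, b, c] 1) (cornerSet [a, b, c] 2) := by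
    rw [Set.disjoint_left]
    intro T h0 h1
    rw [hmem] at h0 h1
    exact absurd (hkey T 1 _ 2 _ h0.1 h0.2 h1.2).1 (by omega)
  rw [hu, Set.ncard_union_eq (by exact (Set.disjoint_union_left).2 ⟨hd02, hd12⟩)
      (hf0.union hf1) hf2,
    Set.ncard_union_eq hd01 hf0 hf1]
  -- now compute each piece
  have hp0 : (cornerSet [a, b, c] 0).ncard
      = if b < a then ({T : ℕ → ℕ → ℕ | IsSkewSYT [a - 1, b, c] [] T}).ncard else 0 := by
    by_cases hba : b < a
    · rw [if_pos hba]
      exact corner_ncard [a, b, c] [a - 1, b, c] 0 (by simp)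
        (by rw [hga]; omega) (by rw [hga, hgb]; omega) rfl
        (by intro r; rcases r with _ | _ | _ | r <;>
          simp [List.getD_cons_zero, List.getD_cons_succ, List.getD])
        (by rw [sum3, sum3]; omega)
    · rw [if_neg hba]
      have : cornerSet [a, b, c] 0 = ∅ := by
        ext T
        rw [hmem, hga]
        simp only [Set.mem_empty_iff_false, iff_false]
        rintro ⟨hT, hval⟩
        have hcell := hcellpos T hT 0 (a - 1) (by omega)
        have ha1 : 1 ≤ a := by
          rcases (cell3_iff a b c 0 (a - 1)).1 hcell with ⟨-, h⟩ | ⟨h, -⟩ | ⟨h, -⟩ <;> omega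
        have hcell2 : skewCell [a, b, c] [] 1 (a - 1) :=
          (cell3_iff a b c 1 (a - 1)).2 (Or.inr (Or.inl ⟨rfl, by omega⟩))
        have hlt := ((IsSkewSYT_iff _ _).1 hT).2.2.2.2.2 0 (a - 1) hcell hcell2
        norm_num at hlt
        have hle := (((IsSkewSYT_iff _ _).1 hT).2.1 1 (a - 1) hcell2).2
        rw [sum3] at hle
        omega
      rw [this, Set.ncard_empty]
  have hp1 : (cornerSet [a, b, c] 1).ncard
      = if c < b then ({T : ℕ → ℕ → ℕ | IsSkewSYT [a, b - 1, c] [] T}).ncard else 0 := by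
    by_cases hcb : c < b
    · rw [if_pos hcb]
      exact corner_ncard [a, b, c] [a, b - 1, c] 1 (by simp)
        (by rw [hgb]; omega) (by rw [hgb, hgc]; omega) rfl
        (by intro r; rcases r with _ | _ | _ | r <;>
          simp [List.getD_cons_zero, List.getD_cons_succ, List.getD])
        (by rw [sum3, sum3]; omega)
    · rw [if_neg hcb]
      have : cornerSet [a, b, c] 1 = ∅ := by
        ext T
        rw [hmem, hgb]
        simp only [Set.mem_empty_iff_false, iff_false]
        rintro ⟨hT, hval⟩
        have hcell := hcellpos T hT 1 (b - 1) (by omega)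
        have hb1 : 1 ≤ b := by
          rcases (cell3_iff a b c 1 (b - 1)).1 hcell with ⟨h, -⟩ | ⟨-, h⟩ | ⟨h, -⟩ <;> omega
        have hcell2 : skewCell [a, b, c] [] 2 (b - 1) :=
          (cell3_iff a b c 2 (b - 1)).2 (Or.inr (Or.inr ⟨rfl, by omega⟩))
        have hlt := ((IsSkewSYT_iff _ _).1 hT).2.2.2.2.2 1 (b - 1) hcell hcell2
        norm_num at hlt
        have hle := (((IsSkewSYT_iff _ _).1 hT).2.1 2 (b - 1) hcell2).2
        rw [sum3] at hle
        omega
      rw [this, Set.ncard_empty]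
  have hp2 : (cornerSet [a, b, c] 2).ncard
      = if 0 < c then ({T : ℕ → ℕ → ℕ | IsSkewSYT [a, b, c - 1] [] T}).ncard else 0 := by
    by_cases hc0 : 0 < c
    · rw [if_pos hc0]
      exact corner_ncard [a, b, c] [a, b, c - 1] 2 (by simp)
        (by rw [hgc]; omega) (by simp [List.getD]; omega) rfl
        (by intro r; rcases r with _ | _ | _ | r <;>
          simp [List.getD_cons_zero, List.getD_cons_succ, List.getD])
        (by rw [sum3, sum3]; omega)
    · rw [if_neg hc0]
      have : cornerSet [a, b, c] 2 = ∅ := by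
        ext T
        rw [hmem, hgc]
        simp only [Set.mem_empty_iff_false, iff_false]
        rintro ⟨hT, hval⟩
        have hcell := hcellpos T hT 2 (c - 1) (by omega)
        rcases (cell3_iff a b c 2 (c - 1)).1 hcell with ⟨h, -⟩ | ⟨h, -⟩ | ⟨-, h⟩ <;> omega
      rw [this, Set.ncard_empty]
  rw [hp0, hp1, hp2]
noncomputable def hookVal (p q c : ℕ) : ℚ :=
  (Nat.factorial (p + 2 * q + 3 * c) : ℚ) * ((p : ℚ) + 1) * ((q : ℚ) + 1)
      * ((p : ℚ) + (q : ℚ) + 2)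
    / ((Nat.factorial (p + q + c + 2) : ℚ) * (Nat.factorial (q + c + 1) : ℚ)
      * (Nat.factorial c : ℚ))

lemma hid1 (p q c : ℕ) :
    hookVal p (q + 1) (c + 1) + hookVal (p + 2) q (c + 1) + hookVal (p + 1) (q + 2) c
      = hookVal (p + 1) (q + 1) (c + 1) := by
  simp only [hookVal]
  rw [show p + 2 * (q + 1) + 3 * (c + 1) = p + 2 * q + 3 * c + 5 from by ring,
    show p + 2 + 2 * q + 3 * (c + 1) = p + 2 * q + 3 * c + 5 from by ring,
    show p + 1 + 2 * (q + 2) + 3 * c = p + 2 * q + 3 * c + 5 from by ring,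
    show p + 1 + 2 * (q + 1) + 3 * (c + 1) = p + 2 * q + 3 * c + 5 + 1 from by ring,
    show p + (q + 1) + (c + 1) + 2 = p + q + c + 4 from by ring,
    show p + 2 + q + (c + 1) + 2 = p + q + c + 4 + 1 from by ring,
    show p + 1 + (q + 2) + c + 2 = p + q + c + 4 + 1 from by ring,
    show p + 1 + (q + 1) + (c + 1) + 2 = p + q + c + 4 + 1 from by ring,
    show q + 1 + (c + 1) + 1 = q + c + 2 + 1 from by ring,
    show q + (c + 1) + 1 = q + c + 2 from by ring,
    show q + 2 + c + 1 = q + c + 2 + 1 from by ring,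
    Nat.factorial_succ (p + 2 * q + 3 * c + 5), Nat.factorial_succ (p + q + c + 4),
    Nat.factorial_succ (q + c + 2), Nat.factorial_succ c]
  have h1 : ((p + q + c + 4).factorial : ℚ) ≠ 0 := Nat.cast_ne_zero.2 (Nat.factorial_ne_zero _)
  have h2 : ((q + c + 2).factorial : ℚ) ≠ 0 := Nat.cast_ne_zero.2 (Nat.factorial_ne_zero _)
  have h3 : ((c : ℕ).factorial : ℚ) ≠ 0 := Nat.cast_ne_zero.2 (Nat.factorial_ne_zero _)
  have h4 : ((p : ℚ) + q + c + 5) ≠ 0 := by positivity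
  have h5 : ((q : ℚ) + c + 3) ≠ 0 := by positivity
  have h6 : ((c : ℚ) + 1) ≠ 0 := by positivity
  push_cast
  field_simp
  ring
lemma hid2 (p q : ℕ) :
    hookVal p (q + 1) 0 + hookVal (p + 2) q 0 = hookVal (p + 1) (q + 1) 0 := by
  simp only [hookVal]
  rw [show p + 2 * (q + 1) + 3 * 0 = p + 2 * q + 2 from by ring,
    show p + 2 + 2 * q + 3 * 0 = p + 2 * q + 2 from by ring,
    show p + 1 + 2 * (q + 1) + 3 * 0 = p + 2 * q + 2 + 1 from by ring,
    show p + (q + 1) + 0 + 2 = p + q + 3 from by ring,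
    show p + 2 + q + 0 + 2 = p + q + 3 + 1 from by ring,
    show p + 1 + (q + 1) + 0 + 2 = p + q + 3 + 1 from by ring,
    show q + 1 + 0 + 1 = q + 1 + 1 from by ring,
    show q + 0 + 1 = q + 1 from by ring,
    Nat.factorial_succ (p + 2 * q + 2), Nat.factorial_succ (p + q + 3),
    Nat.factorial_succ (q + 1), Nat.factorial_zero]
  have h1 : ((p + q + 3).factorial : ℚ) ≠ 0 := Nat.cast_ne_zero.2 (Nat.factorial_ne_zero _)
  have h2 : ((q + 1).factorial : ℚ) ≠ 0 := Nat.cast_ne_zero.2 (Nat.factorial_ne_zero _)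
  have h4 : ((p : ℚ) + q + 4) ≠ 0 := by positivity
  have h5 : ((q : ℚ) + 2) ≠ 0 := by positivity
  push_cast
  field_simp
  ring

lemma hid3 (p c : ℕ) :
    hookVal p 0 (c + 1) + hookVal (p + 1) 1 c = hookVal (p + 1) 0 (c + 1) := by
  simp only [hookVal]
  rw [show p + 2 * 0 + 3 * (c + 1) = p + 3 * c + 3 from by ring,
    show p + 1 + 2 * 1 + 3 * c = p + 3 * c + 3 from by ring,
    show p + 1 + 2 * 0 + 3 * (c + 1) = p + 3 * c + 3 + 1 from by ring,
    show p + 0 + (c + 1) + 2 = p + c + 3 from by ring,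
    show p + 1 + 1 + c + 2 = p + c + 3 + 1 from by ring,
    show p + 1 + 0 + (c + 1) + 2 = p + c + 3 + 1 from by ring,
    show 0 + (c + 1) + 1 = c + 2 from by ring,
    show 1 + c + 1 = c + 2 from by ring,
    Nat.factorial_succ (p + 3 * c + 3), Nat.factorial_succ (p + c + 3),
    Nat.factorial_succ c]
  have h1 : ((p + c + 3).factorial : ℚ) ≠ 0 := Nat.cast_ne_zero.2 (Nat.factorial_ne_zero _)
  have h2 : ((c + 2).factorial : ℚ) ≠ 0 := Nat.cast_ne_zero.2 (Nat.factorial_ne_zero _)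
  have h3 : ((c : ℕ).factorial : ℚ) ≠ 0 := Nat.cast_ne_zero.2 (Nat.factorial_ne_zero _)
  have h4 : ((p : ℚ) + c + 4) ≠ 0 := by positivity
  have h6 : ((c : ℚ) + 1) ≠ 0 := by positivity
  push_cast
  field_simp
  ring

lemma hid4 (p : ℕ) : hookVal p 0 0 = hookVal (p + 1) 0 0 := by
  simp only [hookVal]
  rw [show p + 2 * 0 + 3 * 0 = p from by ring,
    show p + 1 + 2 * 0 + 3 * 0 = p + 1 from by ring,
    show p + 0 + 0 + 2 = p + 2 from by ring,
    show p + 1 + 0 + 0 + 2 = p + 2 + 1 from by ring,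
    show (0 : ℕ) + 0 + 1 = 1 from by ring,
    Nat.factorial_succ p, Nat.factorial_succ (p + 2),
    Nat.factorial_one, Nat.factorial_zero]
  have h1 : ((p + 2).factorial : ℚ) ≠ 0 := Nat.cast_ne_zero.2 (Nat.factorial_ne_zero _)
  have h4 : ((p : ℚ) + 3) ≠ 0 := by positivity
  push_cast
  field_simp
  ring

lemma hid5 (q c : ℕ) :
    hookVal 1 q (c + 1) + hookVal 0 (q + 2) c = hookVal 0 (q + 1) (c + 1) := by
  simp only [hookVal]
  rw [show 1 + 2 * q + 3 * (c + 1) = 2 * q + 3 * c + 4 from by ring,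
    show 0 + 2 * (q + 2) + 3 * c = 2 * q + 3 * c + 4 from by ring,
    show 0 + 2 * (q + 1) + 3 * (c + 1) = 2 * q + 3 * c + 4 + 1 from by ring,
    show 1 + q + (c + 1) + 2 = q + c + 4 from by ring,
    show 0 + (q + 2) + c + 2 = q + c + 4 from by ring,
    show 0 + (q + 1) + (c + 1) + 2 = q + c + 4 from by ring,
    show q + (c + 1) + 1 = q + c + 2 from by ring,
    show q + 2 + c + 1 = q + c + 2 + 1 from by ring,
    show q + 1 + (c + 1) + 1 = q + c + 2 + 1 from by ring,
    Nat.factorial_succ (2 * q + 3 * c + 4), Nat.factorial_succ (q + c + 2),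
    Nat.factorial_succ c]
  have h1 : ((q + c + 4).factorial : ℚ) ≠ 0 := Nat.cast_ne_zero.2 (Nat.factorial_ne_zero _)
  have h2 : ((q + c + 2).factorial : ℚ) ≠ 0 := Nat.cast_ne_zero.2 (Nat.factorial_ne_zero _)
  have h3 : ((c : ℕ).factorial : ℚ) ≠ 0 := Nat.cast_ne_zero.2 (Nat.factorial_ne_zero _)
  have h5 : ((q : ℚ) + c + 3) ≠ 0 := by positivity
  have h6 : ((c : ℚ) + 1) ≠ 0 := by positivity
  push_cast
  field_simp
  ring

lemma hid6 (q : ℕ) : hookVal 1 q 0 = hookVal 0 (q + 1) 0 := by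
  simp only [hookVal]
  rw [show 1 + 2 * q + 3 * 0 = 2 * q + 1 from by ring,
    show 0 + 2 * (q + 1) + 3 * 0 = 2 * q + 1 + 1 from by ring,
    show 1 + q + 0 + 2 = q + 3 from by ring,
    show 0 + (q + 1) + 0 + 2 = q + 3 from by ring,
    show q + 0 + 1 = q + 1 from by ring,
    show q + 1 + 0 + 1 = q + 1 + 1 from by ring,
    Nat.factorial_succ (2 * q + 1), Nat.factorial_succ (q + 1), Nat.factorial_zero]
  have h1 : ((q + 3).factorial : ℚ) ≠ 0 := Nat.cast_ne_zero.2 (Nat.factorial_ne_zero _)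
  have h2 : ((q + 1).factorial : ℚ) ≠ 0 := Nat.cast_ne_zero.2 (Nat.factorial_ne_zero _)
  have h5 : ((q : ℚ) + 2) ≠ 0 := by positivity
  push_cast
  field_simp
  ring

lemma hid7 (c : ℕ) : hookVal 0 1 c = hookVal 0 0 (c + 1) := by
  simp only [hookVal]
  rw [show 0 + 2 * 1 + 3 * c = 3 * c + 2 from by ring,
    show 0 + 2 * 0 + 3 * (c + 1) = 3 * c + 2 + 1 from by ring,
    show 0 + 1 + c + 2 = c + 3 from by ring,
    show 0 + 0 + (c + 1) + 2 = c + 3 from by ring,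
    show 1 + c + 1 = c + 2 from by ring,
    show 0 + (c + 1) + 1 = c + 2 from by ring,
    Nat.factorial_succ (3 * c + 2), Nat.factorial_succ c]
  have h1 : ((c + 3).factorial : ℚ) ≠ 0 := Nat.cast_ne_zero.2 (Nat.factorial_ne_zero _)
  have h2 : ((c + 2).factorial : ℚ) ≠ 0 := Nat.cast_ne_zero.2 (Nat.factorial_ne_zero _)
  have h3 : ((c : ℕ).factorial : ℚ) ≠ 0 := Nat.cast_ne_zero.2 (Nat.factorial_ne_zero _)
  have h6 : ((c : ℚ) + 1) ≠ 0 := by positivity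
  push_cast
  field_simp
  ring
lemma sset_eq_hook (N : ℕ) : ∀ p q c : ℕ, p + 2 * q + 3 * c = N →
    ((({T : ℕ → ℕ → ℕ | IsSkewSYT [p + q + c, q + c, c] [] T}).ncard : ℚ))
      = hookVal p q c := by
  induction N using Nat.strong_induction_on with
  | _ N IH =>
  intro p q c hN
  rcases Nat.eq_zero_or_pos N with rfl | hNpos
  · obtain ⟨rfl, rfl, rfl⟩ : p = 0 ∧ q = 0 ∧ c = 0 := by omega
    have hset : {T : ℕ → ℕ → ℕ | IsSkewSYT [0 + 0 + 0, 0 + 0, 0] [] T}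
        = {(fun _ _ => 0 : ℕ → ℕ → ℕ)} := by
      ext T
      simp only [Set.mem_setOf_eq, Set.mem_singleton_iff]
      constructor
      · intro hT
        funext r x
        refine ((IsSkewSYT_iff _ _).1 hT).1 r x ?_
        rw [cell3_iff]
        omega
      · rintro rfl
        rw [IsSkewSYT_iff]
        refine ⟨fun _ _ _ => rfl, ?_, ?_, ?_, ?_, ?_⟩
        · intro r x hc
          exact absurd ((cell3_iff _ _ _ _ _).1 hc) (by omega)
        · intro r x r' x' hc
          exact absurd ((cell3_iff _ _ _ _ _).1 hc) (by omega)
        · intro v h1 h2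
          rw [sum3] at h2
          omega
        · intro r x hc
          exact absurd ((cell3_iff _ _ _ _ _).1 hc) (by omega)
        · intro r x hc
          exact absurd ((cell3_iff _ _ _ _ _).1 hc) (by omega)
    rw [hset, Set.ncard_singleton]
    simp [hookVal, Nat.factorial]
  · have hcong : ∀ a b c a' b' c' : ℕ, a = a' → b = b' → c = c' →
        ({T : ℕ → ℕ → ℕ | IsSkewSYT [a, b, c] [] T}).ncard
          = ({T : ℕ → ℕ → ℕ | IsSkewSYT [a', b', c'] [] T}).ncard := by
      rintro a b c a' b' c' rfl rfl rfl
      rfl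
    rw [sset_rec (p + q + c) (q + c) c (by omega) (by omega) (by omega)]
    split_ifs with h1 h2 h3
    -- case p>0, q>0, c>0
    · obtain ⟨p', rfl⟩ : ∃ p', p = p' + 1 := ⟨p - 1, by omega⟩
      obtain ⟨q', rfl⟩ : ∃ q', q = q' + 1 := ⟨q - 1, by omega⟩
      obtain ⟨c', rfl⟩ : ∃ c', c = c' + 1 := ⟨c - 1, by omega⟩
      have e1 : (({T : ℕ → ℕ → ℕ |
          IsSkewSYT [p' + 1 + (q' + 1) + (c' + 1) - 1, q' + 1 + (c' + 1), c' + 1] [] T}).ncard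
            : ℚ) = hookVal p' (q' + 1) (c' + 1) := by
        rw [hcong (p' + 1 + (q' + 1) + (c' + 1) - 1) (q' + 1 + (c' + 1)) (c' + 1) (p' + (q' + 1) + (c' + 1)) ((q' + 1) + (c' + 1)) ((c' + 1))
          (by omega) (by omega) (by omega)]
        exact IH (N - 1) (by omega) (p') ((q' + 1)) ((c' + 1)) (by omega)
      have e2 : (({T : ℕ → ℕ → ℕ |
          IsSkewSYT [p' + 1 + (q' + 1) + (c' + 1), q' + 1 + (c' + 1) - 1, c' + 1] [] T}).ncard
            : ℚ) = hookVal (p' + 2) q' (c' + 1) := by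
        rw [hcong (p' + 1 + (q' + 1) + (c' + 1)) (q' + 1 + (c' + 1) - 1) (c' + 1) ((p' + 2) + q' + (c' + 1)) (q' + (c' + 1)) ((c' + 1))
          (by omega) (by omega) (by omega)]
        exact IH (N - 1) (by omega) ((p' + 2)) (q') ((c' + 1)) (by omega)
      have e3 : (({T : ℕ → ℕ → ℕ |
          IsSkewSYT [p' + 1 + (q' + 1) + (c' + 1), q' + 1 + (c' + 1), c' + 1 - 1] [] T}).ncard
            : ℚ) = hookVal (p' + 1) (q' + 2) c' := by
        rw [hcong (p' + 1 + (q' + 1) + (c' + 1)) (q' + 1 + (c' + 1)) (c' + 1 - 1) ((p' + 1) + (q' + 2) + c') ((q' + 2) + c') (c')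
          (by omega) (by omega) (by omega)]
        exact IH (N - 1) (by omega) ((p' + 1)) ((q' + 2)) (c') (by omega)
      rw [Nat.cast_add, Nat.cast_add, e1, e2, e3]
      exact hid1 p' q' c'
    -- case p>0, q>0, c=0
    · obtain ⟨p', rfl⟩ : ∃ p', p = p' + 1 := ⟨p - 1, by omega⟩
      obtain ⟨q', rfl⟩ : ∃ q', q = q' + 1 := ⟨q - 1, by omega⟩
      obtain rfl : c = 0 := by omega
      have e1 : (({T : ℕ → ℕ → ℕ |
          IsSkewSYT [p' + 1 + (q' + 1) + 0 - 1, q' + 1 + 0, 0] [] T}).ncard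
            : ℚ) = hookVal p' (q' + 1) 0 := by
        rw [hcong (p' + 1 + (q' + 1) + 0 - 1) (q' + 1 + 0) (0) (p' + (q' + 1) + 0) ((q' + 1) + 0) (0)
          (by omega) (by omega) (by omega)]
        exact IH (N - 1) (by omega) (p') ((q' + 1)) (0) (by omega)
      have e2 : (({T : ℕ → ℕ → ℕ |
          IsSkewSYT [p' + 1 + (q' + 1) + 0, q' + 1 + 0 - 1, 0] [] T}).ncard
            : ℚ) = hookVal (p' + 2) q' 0 := by
        rw [hcong (p' + 1 + (q' + 1) + 0) (q' + 1 + 0 - 1) (0) ((p' + 2) + q' + 0) (q' + 0) (0)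
          (by omega) (by omega) (by omega)]
        exact IH (N - 1) (by omega) ((p' + 2)) (q') (0) (by omega)
      rw [Nat.cast_add, Nat.cast_add, e1, e2, Nat.cast_zero, add_zero]
      exact hid2 p' q'
    -- case p>0, q=0, c>0
    · obtain ⟨p', rfl⟩ : ∃ p', p = p' + 1 := ⟨p - 1, by omega⟩
      obtain rfl : q = 0 := by omega
      obtain ⟨c', rfl⟩ : ∃ c', c = c' + 1 := ⟨c - 1, by omega⟩
      have e1 : (({T : ℕ → ℕ → ℕ |
          IsSkewSYT [p' + 1 + 0 + (c' + 1) - 1, 0 + (c' + 1), c' + 1] [] T}).ncard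
            : ℚ) = hookVal p' 0 (c' + 1) := by
        rw [hcong (p' + 1 + 0 + (c' + 1) - 1) (0 + (c' + 1)) (c' + 1) (p' + 0 + (c' + 1)) (0 + (c' + 1)) ((c' + 1))
          (by omega) (by omega) (by omega)]
        exact IH (N - 1) (by omega) (p') (0) ((c' + 1)) (by omega)
      have e3 : (({T : ℕ → ℕ → ℕ |
          IsSkewSYT [p' + 1 + 0 + (c' + 1), 0 + (c' + 1), c' + 1 - 1] [] T}).ncard
            : ℚ) = hookVal (p' + 1) 1 c' := by
        rw [hcong (p' + 1 + 0 + (c' + 1)) (0 + (c' + 1)) (c' + 1 - 1) ((p' + 1) + 1 + c') (1 + c') (c')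
          (by omega) (by omega) (by omega)]
        exact IH (N - 1) (by omega) ((p' + 1)) (1) (c') (by omega)
      rw [Nat.cast_add, Nat.cast_add, e1, e3, Nat.cast_zero, add_zero]
      exact hid3 p' c'
    -- case p>0, q=0, c=0
    · obtain ⟨p', rfl⟩ : ∃ p', p = p' + 1 := ⟨p - 1, by omega⟩
      obtain rfl : q = 0 := by omega
      obtain rfl : c = 0 := by omega
      have e1 : (({T : ℕ → ℕ → ℕ |
          IsSkewSYT [p' + 1 + 0 + 0 - 1, 0 + 0, 0] [] T}).ncard
            : ℚ) = hookVal p' 0 0 := by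
        rw [hcong (p' + 1 + 0 + 0 - 1) (0 + 0) (0) (p' + 0 + 0) (0 + 0) (0)
          (by omega) (by omega) (by omega)]
        exact IH (N - 1) (by omega) (p') (0) (0) (by omega)
      rw [Nat.cast_add, Nat.cast_add, e1, Nat.cast_zero, add_zero, add_zero]
      exact hid4 p'
    -- case p=0, q>0, c>0
    · obtain rfl : p = 0 := by omega
      obtain ⟨q', rfl⟩ : ∃ q', q = q' + 1 := ⟨q - 1, by omega⟩
      obtain ⟨c', rfl⟩ : ∃ c', c = c' + 1 := ⟨c - 1, by omega⟩
      have e2 : (({T : ℕ → ℕ → ℕ |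
          IsSkewSYT [0 + (q' + 1) + (c' + 1), q' + 1 + (c' + 1) - 1, c' + 1] [] T}).ncard
            : ℚ) = hookVal 1 q' (c' + 1) := by
        rw [hcong (0 + (q' + 1) + (c' + 1)) (q' + 1 + (c' + 1) - 1) (c' + 1) (1 + q' + (c' + 1)) (q' + (c' + 1)) ((c' + 1))
          (by omega) (by omega) (by omega)]
        exact IH (N - 1) (by omega) (1) (q') ((c' + 1)) (by omega)
      have e3 : (({T : ℕ → ℕ → ℕ |
          IsSkewSYT [0 + (q' + 1) + (c' + 1), q' + 1 + (c' + 1), c' + 1 - 1] [] T}).ncard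
            : ℚ) = hookVal 0 (q' + 2) c' := by
        rw [hcong (0 + (q' + 1) + (c' + 1)) (q' + 1 + (c' + 1)) (c' + 1 - 1) (0 + (q' + 2) + c') ((q' + 2) + c') (c')
          (by omega) (by omega) (by omega)]
        exact IH (N - 1) (by omega) (0) ((q' + 2)) (c') (by omega)
      rw [Nat.cast_add, Nat.cast_add, e2, e3, Nat.cast_zero, zero_add]
      exact hid5 q' c'
    -- case p=0, q>0, c=0
    · obtain rfl : p = 0 := by omega
      obtain ⟨q', rfl⟩ : ∃ q', q = q' + 1 := ⟨q - 1, by omega⟩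
      obtain rfl : c = 0 := by omega
      have e2 : (({T : ℕ → ℕ → ℕ |
          IsSkewSYT [0 + (q' + 1) + 0, q' + 1 + 0 - 1, 0] [] T}).ncard
            : ℚ) = hookVal 1 q' 0 := by
        rw [hcong (0 + (q' + 1) + 0) (q' + 1 + 0 - 1) (0) (1 + q' + 0) (q' + 0) (0)
          (by omega) (by omega) (by omega)]
        exact IH (N - 1) (by omega) (1) (q') (0) (by omega)
      rw [Nat.cast_add, Nat.cast_add, e2, Nat.cast_zero, zero_add, add_zero]
      exact hid6 q'
    -- case p=0, q=0, c>0
    · obtain rfl : p = 0 := by omega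
      obtain rfl : q = 0 := by omega
      obtain ⟨c', rfl⟩ : ∃ c', c = c' + 1 := ⟨c - 1, by omega⟩
      have e3 : (({T : ℕ → ℕ → ℕ |
          IsSkewSYT [0 + 0 + (c' + 1), 0 + (c' + 1), c' + 1 - 1] [] T}).ncard
            : ℚ) = hookVal 0 1 c' := by
        rw [hcong (0 + 0 + (c' + 1)) (0 + (c' + 1)) (c' + 1 - 1) (0 + 1 + c') (1 + c') (c')
          (by omega) (by omega) (by omega)]
        exact IH (N - 1) (by omega) (0) (1) (c') (by omega)
      rw [Nat.cast_add, Nat.cast_add, e3, Nat.cast_zero, zero_add, zero_add]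
      exact hid7 c'
    -- case p=0, q=0, c=0 : impossible
    · exact absurd hN (by omega)

/-- for `2 ≤ k ≤ ⌊(n+1)/2⌋`, the number of SYTs of shape `(n, n+1-k, k)`
is `((n-2k+2)/(k-1)) · binom(n-1, k-2) · binom(2n+1, n-1)`. -/
theorem syt_three_row_count (n k : ℕ) (hk1 : 2 ≤ k) (hk2 : k ≤ (n + 1) / 2) :
    (skewSYTCount [n, n + 1 - k, k] [] : ℚ) =
      (((n : ℚ) - 2 * (k : ℚ) + 2) / ((k : ℚ) - 1)) * ((n - 1).choose (k - 2) : ℚ) *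
        ((2 * n + 1).choose (n - 1) : ℚ) := by
  have hcong : ∀ a b c a' b' c' : ℕ, a = a' → b = b' → c = c' →
      ({T : ℕ → ℕ → ℕ | IsSkewSYT [a, b, c] [] T}).ncard
        = ({T : ℕ → ℕ → ℕ | IsSkewSYT [a', b', c'] [] T}).ncard := by
    rintro a b c a' b' c' rfl rfl rfl
    rfl
  have h2k : 2 * k ≤ n + 1 := by omega
  obtain ⟨j, rfl⟩ : ∃ j, k = j + 2 := ⟨k - 2, by omega⟩
  obtain ⟨m, rfl⟩ : ∃ m, n = m + 2 * j + 3 := ⟨n - 2 * j - 3, by omega⟩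
  have h1 : skewSYTCount [m + 2 * j + 3, m + 2 * j + 3 + 1 - (j + 2), j + 2] []
      = ({T : ℕ → ℕ → ℕ |
          IsSkewSYT [m + 2 * j + 3, m + 2 * j + 3 + 1 - (j + 2), j + 2] [] T}).ncard := by
    rw [skewSYTCount, ← Nat.card_coe_set_eq]
    rfl
  rw [h1, hcong (m + 2 * j + 3) (m + 2 * j + 3 + 1 - (j + 2)) (j + 2)
      ((j + 1) + m + (j + 2)) (m + (j + 2)) (j + 2) (by omega) (by omega) (by omega),
    sset_eq_hook ((j + 1) + 2 * m + 3 * (j + 2)) (j + 1) m (j + 2) rfl]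
  -- now a pure arithmetic identity
  rw [show m + 2 * j + 3 - 1 = m + 2 * j + 2 from by omega,
    show j + 2 - 2 = j from by omega,
    Nat.cast_choose ℚ (show j ≤ m + 2 * j + 2 from by omega),
    Nat.cast_choose ℚ (show m + 2 * j + 2 ≤ 2 * (m + 2 * j + 3) + 1 from by omega),
    show m + 2 * j + 2 - j = m + j + 2 from by omega,
    show 2 * (m + 2 * j + 3) + 1 - (m + 2 * j + 2) = m + 2 * j + 5 from by omega,
    show 2 * (m + 2 * j + 3) + 1 = 2 * m + 4 * j + 7 from by omega]
  simp only [hookVal]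
  rw [show j + 1 + 2 * m + 3 * (j + 2) = 2 * m + 4 * j + 7 from by ring,
    show j + 1 + m + (j + 2) + 2 = m + 2 * j + 5 from by ring,
    show m + (j + 2) + 1 = m + j + 2 + 1 from by ring,
    show (j + 2 : ℕ) = j + 1 + 1 from by ring,
    Nat.factorial_succ (m + j + 2), Nat.factorial_succ (j + 1), Nat.factorial_succ j]
  have h1' : ((m + 2 * j + 5).factorial : ℚ) ≠ 0 := Nat.cast_ne_zero.2 (Nat.factorial_ne_zero _)
  have h2' : ((m + j + 2).factorial : ℚ) ≠ 0 := Nat.cast_ne_zero.2 (Nat.factorial_ne_zero _)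
  have h3' : ((m + 2 * j + 2).factorial : ℚ) ≠ 0 := Nat.cast_ne_zero.2 (Nat.factorial_ne_zero _)
  have h4' : ((j : ℕ).factorial : ℚ) ≠ 0 := Nat.cast_ne_zero.2 (Nat.factorial_ne_zero _)
  have h5' : ((m : ℚ) + j + 3) ≠ 0 := by positivity
  have h6' : ((j : ℚ) + 1) ≠ 0 := by positivity
  have h7' : ((j : ℚ) + 2) ≠ 0 := by positivity
  have h8' : ((j : ℚ) + 1 + 1) - 1 ≠ 0 := by
    have : ((j : ℚ) + 1 + 1) - 1 = (j : ℚ) + 1 := by ring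
    rw [this]; positivity
  push_cast
  field_simp
  ring
end

section
/- Let π = π₁π₂⋯π_{2n+1} be a minimal permutation of length 2n+1 with n+1 descents whose unique pair of consecutive descents is (2i−1, 2i), for some 1 ≤ i ≤ n. Then π is Knuth equivalent to the permutation π' = π₁π₂⋯π_{2i−1}π_{2i} π_{2i+2}π_{2i+4}⋯π_{2n} π_{2i+1}π_{2i+3}⋯π_{2n+1}, obtained from π by fixing the first 2i entries and then listing the remaining entries with even subscripts followed by those with odd subscripts. -/
lemma KnuthEquiv.refl (a : List ℕ) : KnuthEquiv a a := Relation.EqvGen.refl a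
lemma KnuthEquiv.trans {a b c} (h1 : KnuthEquiv a b) (h2 : KnuthEquiv b c) : KnuthEquiv a c :=
  Relation.EqvGen.trans _ _ _ h1 h2
lemma KnuthEquiv.step {a b} (h : KnuthStep a b) : KnuthEquiv a b := Relation.EqvGen.rel _ _ h

lemma KnuthStep.append {a b} (u v : List ℕ) (h : KnuthStep a b) :
    KnuthStep (u ++ a ++ v) (u ++ b ++ v) := by
  cases h with
  | k1 u' v' x y z hxy hyz =>
      have e1 : u ++ (u' ++ [x, z, y] ++ v') ++ v = (u ++ u') ++ [x, z, y] ++ (v' ++ v) := by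
        simp [List.append_assoc]
      have e2 : u ++ (u' ++ [z, x, y] ++ v') ++ v = (u ++ u') ++ [z, x, y] ++ (v' ++ v) := by
        simp [List.append_assoc]
      rw [e1, e2]; exact KnuthStep.k1 _ _ x y z hxy hyz
  | k2 u' v' x y z hxy hyz =>
      have e1 : u ++ (u' ++ [y, x, z] ++ v') ++ v = (u ++ u') ++ [y, x, z] ++ (v' ++ v) := by
        simp [List.append_assoc]
      have e2 : u ++ (u' ++ [y, z, x] ++ v') ++ v = (u ++ u') ++ [y, z, x] ++ (v' ++ v) := by
        simp [List.append_assoc]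
      rw [e1, e2]; exact KnuthStep.k2 _ _ x y z hxy hyz

lemma KnuthEquiv.append {a b} (u v : List ℕ) (h : KnuthEquiv a b) :
    KnuthEquiv (u ++ a ++ v) (u ++ b ++ v) := by
  induction h with
  | rel x y h => exact KnuthEquiv.step (h.append u v)
  | refl x => exact KnuthEquiv.refl _
  | symm x y _ ih => exact Relation.EqvGen.symm _ _ ih
  | trans x y z _ _ ih1 ih2 => exact ih1.trans ih2

/-- bubble a large element left through an increasing run -/
lemma knuth_bubble : ∀ (E u : List ℕ) (y z : ℕ), List.Chain' (· < ·) (E ++ [y]) →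
    (∀ e ∈ E ++ [y], e < z) → KnuthEquiv (u ++ E ++ [z, y]) (u ++ z :: (E ++ [y]))
  | [], u, y, z, _, _ => by simpa using KnuthEquiv.refl (u ++ [z, y])
  | e :: E, u, y, z, hch, hlt => by
      have hch' : List.Chain' (· < ·) (E ++ [y]) := (List.isChain_cons.mp (show List.IsChain (· < ·) (e :: (E ++ [y])) from hch)).2
      have hlt' : ∀ a ∈ E ++ [y], a < z := fun a ha => hlt a (by simp [ha])
      have ih := knuth_bubble E (u ++ [e]) y z hch' hlt'
      obtain ⟨f, rest, hfr⟩ : ∃ f rest, E ++ [y] = f :: rest := by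
        cases E with
        | nil => exact ⟨y, [], rfl⟩
        | cons a t => exact ⟨a, t ++ [y], rfl⟩
      have hef : e < f := by
        have := List.isChain_cons.mp (show List.IsChain (· < ·) (e :: (E ++ [y])) from hch) |>.1
        rw [hfr] at this; simpa using this
      have hfz : f < z := hlt' f (by rw [hfr]; simp)
      have step : KnuthStep (u ++ [e, z, f] ++ rest) (u ++ [z, e, f] ++ rest) :=
        KnuthStep.k1 u rest e f z hef hfz
      have h1 : KnuthEquiv (u ++ (e :: E) ++ [z, y]) (u ++ [e, z, f] ++ rest) := by
        have : u ++ (e :: E) ++ [z, y] = (u ++ [e]) ++ E ++ [z, y] := by simp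
        rw [this]
        have : (u ++ [e]) ++ z :: (E ++ [y]) = u ++ [e, z, f] ++ rest := by
          rw [hfr]; simp
        rw [← this]; exact ih
      have h2 : u ++ [z, e, f] ++ rest = u ++ z :: ((e :: E) ++ [y]) := by
        have he : (e :: E) ++ [y] = e :: (f :: rest) := by rw [List.cons_append, hfr]
        rw [he]; simp
      exact h1.trans (by rw [← h2]; exact KnuthEquiv.step step)

def oddsW (c : ℕ → ℕ) (m : ℕ) : List ℕ := (List.range m).map (fun t => c (2*t+1))
def evensW (c : ℕ → ℕ) (m : ℕ) : List ℕ := (List.range (m+1)).map (fun t => c (2*t))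
def interW (c : ℕ → ℕ) (m : ℕ) : List ℕ := (List.range (2*m+1)).map c

lemma evensW_mono (c : ℕ → ℕ) (m : ℕ) (H : ∀ t < m, c (2*t) < c (2*t+2)) :
    ∀ s t, s < t → t ≤ m → c (2*s) < c (2*t) := by
  intro s t hst htm
  induction t with
  | zero => omega
  | succ t ih =>
      rcases Nat.lt_or_ge s t with h | h
      · have h2 : 2*(t+1) = 2*t+2 := by ring
        rw [h2]
        exact (ih h (by omega)).trans (H t (by omega))
      · have : s = t := by omega
        subst this
        have h2 : 2*(s+1) = 2*s+2 := by ring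
        rw [h2]
        exact H s (by omega)

lemma knuth_main (c : ℕ → ℕ) : ∀ (m : ℕ),
    (∀ t < m, c (2*t) < c (2*t+1) ∧ c (2*t+2) < c (2*t+1) ∧ c (2*t) < c (2*t+2)) →
    ∀ u : List ℕ, KnuthEquiv (u ++ interW c m) (u ++ oddsW c m ++ evensW c m)
  | 0, _, u => by
      simp [interW, oddsW, evensW, List.range_succ]
      exact KnuthEquiv.refl _
  | m+1, H, u => by
      have H' : ∀ t < m, c (2*t) < c (2*t+1) ∧ c (2*t+2) < c (2*t+1) ∧ c (2*t) < c (2*t+2) :=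
        fun t ht => H t (by omega)
      have ih := knuth_main c m H' u
      have hsplit : interW c (m+1) = interW c m ++ [c (2*m+1), c (2*m+2)] := by
        have : 2*(m+1)+1 = (2*m+1) + 1 + 1 := by ring
        rw [interW, this, List.range_succ, List.range_succ]
        simp [interW]
      have step1 : KnuthEquiv (u ++ interW c (m+1))
          ((u ++ oddsW c m ++ evensW c m) ++ [c (2*m+1), c (2*m+2)]) := by
        rw [hsplit, ← List.append_assoc]
        have := (ih.append [] [c (2*m+1), c (2*m+2)])
        simpa using this
      -- bubble c(2m+1) left through evensW c m ++ [c (2m+2)]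
      have hchain : List.Chain' (· < ·) (evensW c m ++ [c (2*(m+1))]) := by
        have : evensW c m ++ [c (2*(m+1))] = (List.range (m+2)).map (fun t => c (2*t)) := by
          rw [show m+2 = (m+1)+1 from rfl, List.range_succ, List.map_append, evensW]; rfl
        rw [this]; show List.IsChain _ _; rw [List.isChain_map]
        have : (m + 2) = (m+1).succ := rfl
        rw [this, List.isChain_range_succ]
        intro t ht
        show c (2*t) < c (2 * (t+1))
        have h : 2 * (t+1) = 2*t+2 := by ring
        rw [h]; exact (H t (by omega)).2.2
      have hlt : ∀ e ∈ evensW c m ++ [c (2*(m+1))], e < c (2*m+1) := by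
        intro e he
        rw [List.mem_append] at he
        rcases he with he | he
        · rw [evensW, List.mem_map] at he
          obtain ⟨t, ht, rfl⟩ := he
          rw [List.mem_range] at ht
          have h1 : c (2*m) < c (2*m+1) := (H m (by omega)).1
          rcases Nat.lt_or_ge t m with h | h
          · exact (evensW_mono c (m+1) (fun t ht => (H t ht).2.2) t m h (by omega)).trans h1
          · have : t = m := by omega
            subst this; exact h1
        · rw [List.mem_singleton] at he
          subst he
          have h : 2*(m+1) = 2*m+2 := by ring
          rw [h]; exact (H m (by omega)).2.1
      have step2 := knuth_bubble (evensW c m) (u ++ oddsW c m) (c (2*(m+1))) (c (2*m+1))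
        hchain hlt
      have e1 : (u ++ oddsW c m) ++ evensW c m ++ [c (2*m+1), c (2*(m+1))] =
          (u ++ oddsW c m ++ evensW c m) ++ [c (2*m+1), c (2*m+2)] := by
        have h : 2*(m+1) = 2*m+2 := by ring
        rw [h]
      have e2 : (u ++ oddsW c m) ++ c (2*m+1) :: (evensW c m ++ [c (2*(m+1))]) =
          u ++ oddsW c (m+1) ++ evensW c (m+1) := by
        have ho : oddsW c (m+1) = oddsW c m ++ [c (2*m+1)] := by
          rw [oddsW, List.range_succ, List.map_append, oddsW]; rfl
        have hev : evensW c (m+1) = evensW c m ++ [c (2*(m+1))] := by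
          rw [evensW, show m+1+1 = (m+1)+1 from rfl, List.range_succ, List.map_append, evensW]; rfl
        rw [ho, hev]; simp
      rw [e1] at step2
      rw [e2] at step2
      exact step1.trans step2

lemma mem_descents {w : List ℕ} {j : ℕ} : j ∈ descents w ↔ DescentAt w j := by
  rw [descents, Finset.mem_filter, Finset.mem_range]
  constructor
  · exact fun h => h.2
  · exact fun h => ⟨by have := h.2.1; omega, h⟩

lemma getD_ne {w : List ℕ} (hnd : w.Nodup) {p q : ℕ} (hp : p < w.length) (hq : q < w.length)
    (hpq : p ≠ q) : w.getD p 0 ≠ w.getD q 0 := by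
  rw [List.getD_eq_getElem _ _ hp, List.getD_eq_getElem _ _ hq]
  intro h
  exact hpq ((hnd.getElem_inj_iff).mp h)

lemma ascent_of_not_descent {w : List ℕ} (hnd : w.Nodup) {j : ℕ} (h1 : 1 ≤ j)
    (h2 : j + 1 ≤ w.length) (h : ¬ DescentAt w j) : w.getD (j-1) 0 < w.getD j 0 := by
  have hne : w.getD (j-1) 0 ≠ w.getD j 0 := getD_ne hnd (by omega) (by omega) (by omega)
  rcases Nat.lt_or_ge (w.getD j 0) (w.getD (j-1) 0) with hlt | hge
  · exact absurd ⟨h1, h2, hlt⟩ h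
  · omega

/-- standardization -/
noncomputable def stdz (s : List ℕ) : List ℕ :=
  s.map (fun x => (s.toFinset.filter (fun y => y ≤ x)).card)

lemma stdz_mono {s : List ℕ} {x x' : ℕ} (hx : x ∈ s) (hx' : x' ∈ s) (h : x < x') :
    (s.toFinset.filter (fun y => y ≤ x)).card < (s.toFinset.filter (fun y => y ≤ x')).card := by
  apply Finset.card_lt_card
  constructor
  · intro a ha
    rw [Finset.mem_filter] at ha ⊢
    exact ⟨ha.1, by omega⟩
  · intro hsub
    have : x' ∈ s.toFinset.filter (fun y => y ≤ x') := by
      rw [Finset.mem_filter]; exact ⟨List.mem_toFinset.mpr hx', le_refl _⟩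
    have := hsub this
    rw [Finset.mem_filter] at this
    omega

lemma stdz_getD {s : List ℕ} {p : ℕ} (hp : p < s.length) :
    (stdz s).getD p 0 = (s.toFinset.filter (fun y => y ≤ s.getD p 0)).card := by
  rw [stdz, List.getD_eq_getElem _ _ (by simpa using hp), List.getElem_map,
    List.getD_eq_getElem _ _ hp]

lemma stdz_relOrder (s : List ℕ) : SameRelOrder s (stdz s) := by
  constructor
  · simp [stdz]
  · intro p q hp hq
    rw [stdz_getD hp, stdz_getD hq]
    have hpmem : s.getD p 0 ∈ s := by
      rw [List.getD_eq_getElem _ _ hp]; exact List.getElem_mem _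
    have hqmem : s.getD q 0 ∈ s := by
      rw [List.getD_eq_getElem _ _ hq]; exact List.getElem_mem _
    constructor
    · exact fun h => stdz_mono hpmem hqmem h
    · intro h
      by_contra hc
      rcases Nat.lt_or_ge (s.getD q 0) (s.getD p 0) with h2 | h2
      · have := stdz_mono hqmem hpmem h2; omega
      · have : s.getD p 0 = s.getD q 0 := by omega
        rw [this] at h; omega

lemma stdz_permWord {s : List ℕ} (hnd : s.Nodup) : IsPermWord s.length (stdz s) := by
  refine ⟨by simp [stdz], ?_, ?_⟩
  · apply List.Nodup.map_on _ hnd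
    intro x hx y hy hxy
    by_contra hne
    rcases Nat.lt_or_ge x y with h | h
    · have := stdz_mono hx hy h; omega
    · have h' : y < x := by omega
      have := stdz_mono hy hx h'; omega
  · intro x hx
    rw [stdz, List.mem_map] at hx
    obtain ⟨a, ha, rfl⟩ := hx
    constructor
    · rw [Nat.one_le_iff_ne_zero, ← Nat.pos_iff_ne_zero, Finset.card_pos]
      exact ⟨a, by rw [Finset.mem_filter]; exact ⟨List.mem_toFinset.mpr ha, le_refl _⟩⟩
    · calc (s.toFinset.filter (fun y => y ≤ a)).card ≤ s.toFinset.card :=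
            Finset.card_le_card (Finset.filter_subset _ _)
        _ = s.length := by rw [List.toFinset_card_of_nodup hnd]

lemma descents_eq_of_relOrder {u v : List ℕ} (h : SameRelOrder u v) :
    descents u = descents v := by
  ext j
  rw [mem_descents, mem_descents, DescentAt, DescentAt, ← h.1]
  constructor
  · rintro ⟨h1, h2, h3⟩
    exact ⟨h1, h2, (h.2 j (j-1) (by omega) (by omega)).mp h3⟩
  · rintro ⟨h1, h2, h3⟩
    exact ⟨h1, h2, (h.2 j (j-1) (by omega) (by omega)).mpr h3⟩

lemma del_getD_lt (w : List ℕ) (r p : ℕ) (hp : p < r) :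
    (w.eraseIdx r).getD p 0 = w.getD p 0 := by
  rw [List.eraseIdx_eq_take_drop_succ]
  by_cases h : p < w.length
  · rw [List.getD_eq_getElem _ _ (by simp [List.length_take, List.length_drop]; omega),
      List.getD_eq_getElem _ _ h]
    rw [List.getElem_append_left (by simp [List.length_take]; omega)]
    simp [List.getElem_take]
  · rw [List.getD_eq_default _ _ (by simp [List.length_take, List.length_drop]; omega),
      List.getD_eq_default _ _ (by omega)]

lemma del_getD_ge (w : List ℕ) (r p : ℕ) (hp : r ≤ p) :
    (w.eraseIdx r).getD p 0 = w.getD (p+1) 0 := by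
  rw [List.eraseIdx_eq_take_drop_succ]
  by_cases h : p + 1 < w.length
  · have hr : r < w.length := by omega
    rw [List.getD_eq_getElem _ _ (by simp [List.length_take, List.length_drop]; omega),
      List.getD_eq_getElem _ _ h]
    rw [List.getElem_append_right (by simp [List.length_take]; omega)]
    rw [List.getElem_drop]
    congr 1
    simp [List.length_take]
    omega
  · rw [List.getD_eq_default _ _ (by simp [List.length_take, List.length_drop]; omega),
      List.getD_eq_default _ _ (by omega)]

lemma length_del {w : List ℕ} {r : ℕ} (hr : r < w.length) :
    (w.eraseIdx r).length = w.length - 1 := by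
  rw [List.eraseIdx_eq_take_drop_succ]
  simp [List.length_take, List.length_drop]
  omega

lemma card_descents_del (w : List ℕ) (r : ℕ) (hr2 : 2 ≤ r) (hrlen : r + 1 < w.length)
    (hnew : w.getD (r+1) 0 < w.getD (r-1) 0)
    (hasc_r : ¬ DescentAt w r)
    (hdesc_r1 : DescentAt w (r+1)) :
    (descents (w.eraseIdx r)).card = (descents w).card := by
  set w' := w.eraseIdx r with hw'
  have hlen' : w'.length = w.length - 1 := length_del (by omega)
  have iff1 : ∀ j, 1 ≤ j → j ≤ r-1 → (DescentAt w' j ↔ DescentAt w j) := by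
    intro j hj1 hj2
    have e1 : w'.getD j 0 = w.getD j 0 := del_getD_lt w r j (by omega)
    have e2 : w'.getD (j-1) 0 = w.getD (j-1) 0 := del_getD_lt w r (j-1) (by omega)
    rw [DescentAt, DescentAt, e1, e2]
    constructor
    · rintro ⟨_, _, h3⟩; exact ⟨hj1, by omega, h3⟩
    · rintro ⟨_, _, h3⟩; exact ⟨hj1, by omega, h3⟩
  have iff3 : ∀ j, r+1 ≤ j → (DescentAt w' j ↔ DescentAt w (j+1)) := by
    intro j hj
    have e1 : w'.getD j 0 = w.getD (j+1) 0 := del_getD_ge w r j (by omega)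
    have e2 : w'.getD (j-1) 0 = w.getD j 0 := by
      rw [del_getD_ge w r (j-1) (by omega)]
      congr 1
      omega
    rw [DescentAt, DescentAt, e1, e2]
    constructor
    · rintro ⟨_, h2, h3⟩
      refine ⟨by omega, by omega, ?_⟩
      have : j + 1 - 1 = j := by omega
      rw [this]; exact h3
    · rintro ⟨_, h2, h3⟩
      refine ⟨by omega, by omega, ?_⟩
      have : j + 1 - 1 = j := by omega
      rw [this] at h3; exact h3
  have hnewD : DescentAt w' r := by
    refine ⟨by omega, by omega, ?_⟩
    rw [del_getD_ge w r r (le_refl r), del_getD_lt w r (r-1) (by omega)]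
    exact hnew
  symm
  apply Finset.card_bij (fun d _ => if d ≤ r - 1 then d else d - 1)
  · intro d hd
    have hdD := mem_descents.mp hd
    rcases Nat.lt_or_ge d r with h | h
    · rw [if_pos (by omega)]
      exact mem_descents.mpr ((iff1 d hdD.1 (by omega)).mpr hdD)
    · have hdr : d ≠ r := fun he => hasc_r (he ▸ hdD)
      rw [if_neg (by omega)]
      rcases Nat.eq_or_lt_of_le (show r + 1 ≤ d by omega) with he | hlt
      · rw [← he]
        have : r + 1 - 1 = r := by omega
        rw [this]
        exact mem_descents.mpr hnewD
      · apply mem_descents.mpr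
        rw [iff3 (d-1) (by omega)]
        have : d - 1 + 1 = d := by omega
        rw [this]; exact hdD
  · intro d1 h1 d2 h2 heq
    have hd1 := mem_descents.mp h1
    have hd2 := mem_descents.mp h2
    have hd1r : d1 ≠ r := fun he => hasc_r (he ▸ hd1)
    have hd2r : d2 ≠ r := fun he => hasc_r (he ▸ hd2)
    have g1 := hd1.1
    have g2 := hd2.1
    by_cases c1 : d1 ≤ r - 1 <;> by_cases c2 : d2 ≤ r - 1 <;>
      simp [c1, c2] at heq <;> omega
  · intro b hb
    have hbD := mem_descents.mp hb
    rcases Nat.lt_or_ge b r with h | h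
    · exact ⟨b, mem_descents.mpr ((iff1 b hbD.1 (by omega)).mp hbD), by rw [if_pos (by omega)]⟩
    · rcases Nat.eq_or_lt_of_le h with he | hlt
      · exact ⟨r+1, mem_descents.mpr hdesc_r1, by rw [if_neg (by omega)]; omega⟩
      · refine ⟨b+1, mem_descents.mpr ((iff3 b (by omega)).mp hbD), ?_⟩
        rw [if_neg (by omega)]
        omega

/-- a minimal permutation `w` of length `2n+1` with `n+1` descents whose
unique pair of consecutive descents is `(2i-1, 2i)` is Knuth equivalent to the word
obtained by fixing its first `2i` entries and then listing the remaining entries with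
even (1-based) subscripts, followed by those with odd subscripts. -/
theorem knuthEquiv_rearrangement (n i : ℕ) (hn : 1 ≤ n) (hi1 : 1 ≤ i) (hi2 : i ≤ n)
    (w : List ℕ) (hw : w ∈ Mset n i) :
    KnuthEquiv w
      (w.take (2 * i) ++
        (List.range (n - i)).map (fun t => w.getD (2 * i + 2 * t + 1) 0) ++
        (List.range (n - i + 1)).map (fun t => w.getD (2 * i + 2 * t) 0)) := by
  obtain ⟨⟨hlen, hnd, hbound⟩, ⟨hcard, hpat⟩, hd1, hd2, huniq⟩ := hw
  -- basic membership facts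
  have hmemD : ∀ d ∈ descents w, 1 ≤ d ∧ d + 1 ≤ 2*n+1 := by
    intro d hd
    have h := mem_descents.mp hd
    exact ⟨h.1, by have := h.2.1; omega⟩
  have h2iD : 2*i ∈ descents w := mem_descents.mpr hd2
  have huniq' : ∀ j, j ∈ descents w → j+1 ∈ descents w → j = 2*i-1 :=
    fun j h1 h2 => huniq j (mem_descents.mp h1) (mem_descents.mp h2)
  -- the erased descent set and the halving map
  set D0 := (descents w).erase (2*i) with hD0
  have hD0card : D0.card = n := by
    rw [hD0, Finset.card_erase_of_mem h2iD, hcard]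
    omega
  have hD0sub : ∀ d ∈ D0, d ∈ descents w := fun d hd => Finset.mem_of_mem_erase hd
  have hnoadj : ∀ a ∈ D0, ∀ b ∈ D0, b = a + 1 → False := by
    intro a ha b hb hab
    have h1 : a ∈ descents w := hD0sub a ha
    have h2 : a + 1 ∈ descents w := hab ▸ hD0sub b hb
    have := huniq' a h1 h2
    have hane : b ≠ 2*i := (Finset.mem_erase.mp hb).1
    omega
  have hinj : Set.InjOn (fun d => (d+1)/2) (D0 : Set ℕ) := by
    intro a ha b hb hab
    simp only [Finset.coe_mem, Finset.mem_coe] at ha hb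
    simp only at hab
    by_contra hne
    have : b = a + 1 ∨ a = b + 1 := by omega
    rcases this with h | h
    · exact hnoadj a ha b hb h
    · exact hnoadj b hb a ha h
  have himg : D0.image (fun d => (d+1)/2) = Finset.Icc 1 n := by
    apply Finset.eq_of_subset_of_card_le
    · intro x hx
      rw [Finset.mem_image] at hx
      obtain ⟨d, hd, rfl⟩ := hx
      have := hmemD d (hD0sub d hd)
      rw [Finset.mem_Icc]
      omega
    · rw [Finset.card_image_of_injOn hinj, hD0card, Nat.card_Icc]
      omega
  have hsur : ∀ k, 1 ≤ k → k ≤ n → (2*k-1 ∈ D0 ∨ 2*k ∈ D0) := by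
    intro k hk1 hk2
    have hx : k ∈ D0.image (fun d => (d+1)/2) := by
      rw [himg, Finset.mem_Icc]; exact ⟨hk1, hk2⟩
    rw [Finset.mem_image] at hx
    obtain ⟨d, hd, hdk⟩ := hx
    have hd1' := (hmemD d (hD0sub d hd)).1
    have : d = 2*k-1 ∨ d = 2*k := by omega
    rcases this with h | h
    · left; exact h ▸ hd
    · right; exact h ▸ hd
  -- even positions past 2i are descents
  have heven : ∀ k, i ≤ k → k ≤ n → 2*k ∈ descents w := by
    intro k hk1
    induction k, hk1 using Nat.le_induction with
    | base => intro _; exact h2iD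
    | succ k hk ih =>
        intro hk2
        have h2k := ih (by omega)
        rcases hsur (k+1) (by omega) hk2 with h | h
        · exfalso
          have he : 2*(k+1)-1 = 2*k+1 := by omega
          rw [he] at h
          have := huniq' (2*k) h2k (hD0sub _ h)
          omega
        · exact hD0sub _ h
  have hodd : ∀ k, i ≤ k → k ≤ n → ¬ DescentAt w (2*k+1) := by
    intro k hk1 hk2 hdesc
    have h2k : DescentAt w (2*k) := mem_descents.mp (heven k hk1 hk2)
    have := huniq (2*k) h2k hdesc
    omega
  have hA : ∀ k, i ≤ k → k < n → w.getD (2*k) 0 < w.getD (2*k+1) 0 := by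
    intro k hk1 hk2
    have h := ascent_of_not_descent hnd (j := 2*k+1) (by omega)
      (by rw [hlen]; omega) (hodd k hk1 (by omega))
    have e : 2*k+1-1 = 2*k := by omega
    rw [e] at h
    exact h
  have hB : ∀ k, i+1 ≤ k → k ≤ n → w.getD (2*k) 0 < w.getD (2*k-1) 0 := by
    intro k hk1 hk2
    have h := (mem_descents.mp (heven k (by omega) hk2)).2.2
    exact h
  -- the diamond property via minimality
  have hC : ∀ k, i ≤ k → k < n → w.getD (2*k) 0 < w.getD (2*k+2) 0 := by
    intro k hk1 hk2
    by_contra hcon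
    have hne : w.getD (2*k) 0 ≠ w.getD (2*k+2) 0 :=
      getD_ne hnd (by rw [hlen]; omega) (by rw [hlen]; omega) (by omega)
    have hgt : w.getD (2*k+2) 0 < w.getD (2*k) 0 := by omega
    set w'' := w.eraseIdx (2*k+1) with hw''
    have hcard'' : (descents w'').card = n+1 := by
      have hdel := card_descents_del w (2*k+1) (by omega) (by rw [hlen]; omega)
        (by
          have e1 : 2*k+1+1 = 2*k+2 := by omega
          have e2 : 2*k+1-1 = 2*k := by omega
          rw [e1, e2]; exact hgt)
        (hodd k hk1 (by omega))
        (by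
          have h := mem_descents.mp (heven (k+1) (by omega) (by omega))
          have e : 2*(k+1) = 2*k+1+1 := by ring
          rw [e] at h; exact h)
      rw [hdel, hcard]
    have hnd'' : w''.Nodup := (List.eraseIdx_sublist w (2*k+1)).nodup hnd
    have hlen'' : w''.length = 2*n := by
      rw [hw'', length_del (by rw [hlen]; omega), hlen]
      omega
    have hrel := stdz_relOrder w''
    have hpermσ : IsPermWord (2*n) (stdz w'') := by
      have := stdz_permWord hnd''
      rw [hlen''] at this
      exact this
    have hcardσ : (descents (stdz w'')).card = n+1 := by
      rw [← descents_eq_of_relOrder hrel]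
      exact hcard''
    exact hpat (2*n) (stdz w'') hpermσ (by rw [hlen]; omega) hcardσ
      ⟨w'', List.eraseIdx_sublist w (2*k+1), hrel⟩
  -- assemble via the Knuth lemma
  have hH : ∀ t < n - i,
      (fun j => w.getD (2*i + j) 0) (2*t) < (fun j => w.getD (2*i + j) 0) (2*t+1) ∧
      (fun j => w.getD (2*i + j) 0) (2*t+2) < (fun j => w.getD (2*i + j) 0) (2*t+1) ∧
      (fun j => w.getD (2*i + j) 0) (2*t) < (fun j => w.getD (2*i + j) 0) (2*t+2) := by
    intro t ht
    simp only [← Nat.add_assoc]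
    refine ⟨?_, ?_, ?_⟩
    · have h := hA (i+t) (by omega) (by omega)
      have e1 : 2*(i+t) = 2*i+2*t := by ring
      rw [e1] at h; exact h
    · have h := hB (i+t+1) (by omega) (by omega)
      have e1 : 2*(i+t+1) = 2*i+2*t+2 := by ring
      rw [e1] at h
      have e2 : 2*i+2*t+2-1 = 2*i+2*t+1 := by omega
      rw [e2] at h; exact h
    · have h := hC (i+t) (by omega) (by omega)
      have e1 : 2*(i+t) = 2*i+2*t := by ring
      rw [e1] at h; exact h
  have hmain := knuth_main (fun j => w.getD (2*i + j) 0) (n - i) hH (w.take (2*i))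
  have hdrop : w.drop (2*i) = interW (fun j => w.getD (2*i + j) 0) (n - i) := by
    apply List.ext_getElem
    · rw [List.length_drop, hlen]
      simp only [interW, List.length_map, List.length_range]
      omega
    · intro j h1 h2
      rw [List.getElem_drop]
      simp only [interW, List.getElem_map, List.getElem_range]
      rw [List.getD_eq_getElem _ _ (by
        rw [List.length_drop] at h1
        omega)]
  have e_lhs : w.take (2*i) ++ interW (fun j => w.getD (2*i + j) 0) (n - i) = w := by
    rw [← hdrop, List.take_append_drop]
  have hodds : oddsW (fun j => w.getD (2*i + j) 0) (n - i) =
      (List.range (n - i)).map (fun t => w.getD (2 * i + 2 * t + 1) 0) := by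
    rw [oddsW]
    apply List.map_congr_left
    intro t _
    show w.getD (2*i + (2*t+1)) 0 = w.getD (2*i + 2*t + 1) 0
    rw [← Nat.add_assoc]
  have hevens : evensW (fun j => w.getD (2*i + j) 0) (n - i) =
      (List.range (n - i + 1)).map (fun t => w.getD (2 * i + 2 * t) 0) := by
    rw [evensW]
  rw [e_lhs, hodds, hevens] at hmain
  exact hmain
end
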